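/- arXiv:1205.1174 — 3 statements merged into one kernel-verified Lean document; each statement's English description precedes it below -/
import Mathlib

section
/- Let (X, μ) be a standard Borel probability space. Suppose a sequence of summable measurable semimetrics ρ_n converges in L¹(X×X, μ×μ) to an admissible summable semimetric ρ. Then ‖ρ_n − ρ‖_m → 0, i.e., the sequence converges to ρ in the m-norm. Consequently, a set of admissible summable semimetrics is compact in the m-norm if and only if it is compact in L¹(X×X, μ×μ). -/
open MeasureTheory Filter Function Set
open scoped ENNReal

/-- A semimetric on `X`: a nonnegative function vanishing on the diagonal, symmetric and
satisfying the triangle inequality for all points. -/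
def IsSemimetric {X : Type*} (ρ : X → X → ℝ) : Prop :=
  (∀ x y, 0 ≤ ρ x y) ∧ (∀ x, ρ x x = 0) ∧ (∀ x y, ρ x y = ρ y x) ∧
    ∀ x y z, ρ x z ≤ ρ x y + ρ y z

/-- A metric on `X`: a semimetric that separates points. -/
def IsMetricFun {X : Type*} (ρ : X → X → ℝ) : Prop :=
  IsSemimetric ρ ∧ ∀ x y, ρ x y = 0 ↔ x = y

/-- The semimetric space `(S, ρ)` is separable. -/
def SeparableOn {X : Type*} (ρ : X → X → ℝ) (S : Set X) : Prop :=
  ∃ D : Set X, D ⊆ S ∧ D.Countable ∧ ∀ x ∈ S, ∀ ε : ℝ, 0 < ε → ∃ y ∈ D, ρ x y < ε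

/-- A semimetric is admissible for `(X, μ)` if it is measurable on `(X × X, μ × μ)` and
separable on a subset of full measure. -/
def Admissible {X : Type*} [MeasurableSpace X] (μ : Measure X) (ρ : X → X → ℝ) : Prop :=
  Measurable (Function.uncurry ρ) ∧
    ∃ S : Set X, MeasurableSet S ∧ μ Sᶜ = 0 ∧ SeparableOn ρ S

/-- An `ε`-cover of size `k`: `X = X₀ ∪ X₁ ∪ ⋯ ∪ X_k` with `μ(X₀) < ε` and
`diam_ρ(X_j) < ε` for `j = 1, …, k`. -/
def IsEpsCover {X : Type*} [MeasurableSpace X] (μ : Measure X) (ρ : X → X → ℝ)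
    (ε : ℝ) (k : ℕ) : Prop :=
  ∃ A : Fin (k + 1) → Set X, (∀ i, MeasurableSet (A i)) ∧ (⋃ i, A i) = Set.univ ∧
    μ (A 0) < ENNReal.ofReal ε ∧
    ∀ i, i ≠ 0 → ∀ x ∈ A i, ∀ y ∈ A i, ρ x y < ε

/-- The `ε`-entropy of `(X, μ, ρ)`: the binary logarithm of the smallest size of an
`ε`-cover, and `∞` if there is no finite `ε`-cover. -/
noncomputable def epsEntropy {X : Type*} [MeasurableSpace X] (μ : Measure X)
    (ρ : X → X → ℝ) (ε : ℝ) : ℝ≥0∞ :=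
  sInf {h : ℝ≥0∞ | ∃ k : ℕ, IsEpsCover μ ρ ε k ∧ h = ENNReal.ofReal (Real.logb 2 k)}

/-- The m-norm of `f`: the infimum of the `L¹`-norms of measurable semimetrics
dominating `|f|` almost everywhere (`∞` if there is no such semimetric). -/
noncomputable def mnorm {X : Type*} [MeasurableSpace X] (μ : Measure X)
    (f : X → X → ℝ) : ℝ≥0∞ :=
  sInf {c : ℝ≥0∞ | ∃ ρ : X → X → ℝ, IsSemimetric ρ ∧ Measurable (Function.uncurry ρ) ∧
    (∀ᵐ p ∂(μ.prod μ), |f p.1 p.2| ≤ ρ p.1 p.2) ∧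
    c = ∫⁻ p, ENNReal.ofReal (ρ p.1 p.2) ∂(μ.prod μ)}

/-- The m-distance between two functions. -/
noncomputable def mdist {X : Type*} [MeasurableSpace X] (μ : Measure X)
    (f g : X → X → ℝ) : ℝ≥0∞ :=
  mnorm μ fun x y => f x y - g x y

/-- The `L¹(X × X, μ × μ)` distance between two functions. -/
noncomputable def L1dist {X : Type*} [MeasurableSpace X] (μ : Measure X)
    (f g : X → X → ℝ) : ℝ≥0∞ :=
  ∫⁻ p, ENNReal.ofReal |f p.1 p.2 - g p.1 p.2| ∂(μ.prod μ)

/-- Sequential compactness of a set of functions with respect to an extended distance. -/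
def SeqCompactIn {X : Type*} (d : (X → X → ℝ) → (X → X → ℝ) → ℝ≥0∞)
    (M : Set (X → X → ℝ)) : Prop :=
  ∀ u : ℕ → X → X → ℝ, (∀ n, u n ∈ M) →
    ∃ g ∈ M, ∃ φ : ℕ → ℕ, StrictMono φ ∧
      Filter.Tendsto (fun n => d (u (φ n)) g) Filter.atTop (nhds 0)

lemma lint_ofReal_ne_top {α : Type*} [MeasurableSpace α] {μ : Measure α} {f : α → ℝ}
    (h : Integrable f μ) (hf : ∀ x, 0 ≤ f x) :
    ∫⁻ x, ENNReal.ofReal (f x) ∂μ ≠ ⊤ := by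
  have h2 := (hasFiniteIntegral_iff_ofReal (Eventually.of_forall hf)).mp h.hasFiniteIntegral
  exact h2.ne


lemma exists_cover {X : Type*} [MeasurableSpace X] (μ : Measure X) [IsProbabilityMeasure μ]
    (ρ : X → X → ℝ) (hρ : IsSemimetric ρ) (hadm : Admissible μ ρ)
    (hint : Integrable (Function.uncurry ρ) (μ.prod μ)) {e : ℝ} (he : 0 < e) :
    ∃ (J : Finset ℕ) (U : ℕ → Set X) (m : ℝ≥0∞),
      (∀ i, MeasurableSet (U i)) ∧
      (∀ i, ∀ x ∈ U i, ∀ y ∈ U i, ρ x y ≤ e) ∧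
      (∀ i ∈ J, m ≤ μ (U i)) ∧ 0 < m ∧ m ≠ ⊤ ∧
      ∫⁻ p in ((⋃ i ∈ J, U i)ᶜ) ×ˢ Set.univ, ENNReal.ofReal (ρ p.1 p.2) ∂(μ.prod μ)
        ≤ ENNReal.ofReal e := by
  classical
  obtain ⟨hρm, S, hSm, hSc, D, hDS, hDcount, hdense⟩ := hadm
  obtain ⟨hρnn, hρ0, hρsym, hρtri⟩ := hρ
  -- D is nonempty
  have hDne : D.Nonempty := by
    by_contra hD
    rw [Set.not_nonempty_iff_eq_empty] at hD
    have hS : S = ∅ := by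
      by_contra hS
      obtain ⟨x, hx⟩ := Set.nonempty_iff_ne_empty.mpr hS
      obtain ⟨y, hy, -⟩ := hdense x hx 1 one_pos
      simp [hD] at hy
    rw [hS, Set.compl_empty] at hSc
    simp at hSc
  obtain ⟨d, hd⟩ := hDcount.exists_eq_range hDne
  set U : ℕ → Set X := fun i => {x | ρ x (d i) < e / 2} with hU
  have hUm : ∀ i, MeasurableSet (U i) := by
    intro i
    have : Measurable fun x => ρ x (d i) :=
      hρm.comp (measurable_id.prodMk measurable_const)
    exact this measurableSet_Iio
  have hUdiam : ∀ i, ∀ x ∈ U i, ∀ y ∈ U i, ρ x y ≤ e := by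
    intro i x hx y hy
    have h1 : ρ x y ≤ ρ x (d i) + ρ (d i) y := hρtri x (d i) y
    have h2 : ρ (d i) y = ρ y (d i) := hρsym (d i) y
    have hx' : ρ x (d i) < e/2 := hx
    have hy' : ρ y (d i) < e/2 := hy
    linarith
  have hScover : S ⊆ ⋃ i, U i := by
    intro x hx
    obtain ⟨y, hy, hxy⟩ := hdense x hx (e/2) (half_pos he)
    rw [hd] at hy
    obtain ⟨i, rfl⟩ := hy
    exact Set.mem_iUnion.mpr ⟨i, hxy⟩
  have hUnull : μ ((⋃ i, U i)ᶜ) = 0 :=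
    measure_mono_null (Set.compl_subset_compl.mpr hScover) hSc
  -- the measure with density ρ
  set ν : Measure (X × X) := (μ.prod μ).withDensity fun p => ENNReal.ofReal (ρ p.1 p.2) with hν
  have hνtot : ν Set.univ ≠ ⊤ := by
    rw [hν, withDensity_apply _ MeasurableSet.univ, setLIntegral_univ]
    exact lint_ofReal_ne_top hint (fun p => hρnn p.1 p.2)
  have hνac : ν ≪ μ.prod μ := withDensity_absolutelyContinuous _ _
  -- decreasing sets
  set T : ℕ → Set X := fun N => (⋃ i ∈ Finset.range N, U i)ᶜ with hT
  have hTm : ∀ N, MeasurableSet (T N) := fun N =>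
    (MeasurableSet.biUnion (Finset.range N).countable_toSet (fun i _ => hUm i)).compl
  have hTanti : Antitone T := by
    intro N M hNM
    apply Set.compl_subset_compl.mpr
    exact Set.biUnion_subset_biUnion_left (Finset.coe_subset.mpr (Finset.range_subset_range.mpr hNM))
  have hTinter : ⋂ N, T N = (⋃ i, U i)ᶜ := by
    rw [hT]
    rw [← Set.compl_iUnion]
    congr 1
    ext x
    simp only [Set.mem_iUnion, Finset.mem_range]
    constructor
    · rintro ⟨N, i, hi, hx⟩; exact ⟨i, hx⟩
    · rintro ⟨i, hx⟩; exact ⟨i + 1, i, Nat.lt_succ_self i, hx⟩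
  -- ν of T N ×ˢ univ tends to 0
  have hTν : Tendsto (fun N => ν (T N ×ˢ Set.univ)) atTop (nhds 0) := by
    have h1 : Tendsto (fun N => ν (T N ×ˢ Set.univ)) atTop
        (nhds (ν (⋂ N, T N ×ˢ (Set.univ : Set X)))) := by
      refine tendsto_measure_iInter_atTop (fun N => ((hTm N).prod MeasurableSet.univ).nullMeasurableSet)
        (fun N M hNM => Set.prod_mono (hTanti hNM) le_rfl) ⟨0, ?_⟩
      exact fun h => hνtot (top_le_iff.mp (h ▸ measure_mono (Set.subset_univ _)))
    have h2 : (⋂ N, T N ×ˢ (Set.univ : Set X)) = (⋂ N, T N) ×ˢ (Set.univ : Set X) := by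
      ext p; simp [Set.mem_iInter]
    have h3 : ν ((⋂ N, T N) ×ˢ (Set.univ : Set X)) = 0 := by
      apply hνac
      rw [Measure.prod_prod, hTinter, hUnull, zero_mul]
    rwa [h2, h3] at h1
  obtain ⟨N, hN⟩ := (hTν.eventually_le_const (by
      simpa using ENNReal.ofReal_pos.mpr he : (0:ℝ≥0∞) < ENNReal.ofReal e)).exists
  -- keep only the cells of positive measure
  set J : Finset ℕ := (Finset.range N).filter (fun i => μ (U i) ≠ 0) with hJ
  set m : ℝ≥0∞ := min 1 (J.inf fun i => μ (U i)) with hm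
  refine ⟨J, U, m, hUm, hUdiam, ?_, ?_, ?_, ?_⟩
  · intro i hi
    exact le_trans (min_le_right _ _) (Finset.inf_le hi)
  · rw [hm, lt_min_iff]
    refine ⟨zero_lt_one, ?_⟩
    rw [Finset.lt_inf_iff (by simp : (0:ℝ≥0∞) < ⊤)]
    intro i hi
    rw [hJ, Finset.mem_filter] at hi
    exact pos_iff_ne_zero.mpr hi.2
  · exact ne_top_of_le_ne_top ENNReal.one_ne_top (min_le_left _ _)
  · -- the integral over the complement
    have hsub : (⋃ i ∈ J, U i)ᶜ ⊆ T N ∪ ⋃ i ∈ (Finset.range N) \ J, U i := by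
      intro x hx
      simp only [Set.mem_compl_iff, Set.mem_iUnion, not_exists] at hx
      by_cases hxT : x ∈ T N
      · exact Set.mem_union_left _ hxT
      · right
        rw [hT] at hxT
        simp only [Set.mem_compl_iff, not_not, Set.mem_iUnion] at hxT
        obtain ⟨i, hi, hxi⟩ := hxT
        refine Set.mem_iUnion₂.mpr ⟨i, ?_, hxi⟩
        rw [Finset.mem_sdiff]
        refine ⟨hi, fun hiJ => hx i hiJ hxi⟩
    have hnull : μ (⋃ i ∈ (Finset.range N) \ J, U i) = 0 := by
      refine le_antisymm (le_trans (measure_biUnion_finset_le _ _) (le_of_eq ?_)) zero_le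
      refine Finset.sum_eq_zero fun i hi => ?_
      rw [Finset.mem_sdiff, hJ, Finset.mem_filter] at hi
      by_contra h
      exact hi.2 ⟨hi.1, h⟩
    have hB : μ.prod μ ((⋃ i ∈ (Finset.range N) \ J, U i) ×ˢ (Set.univ : Set X)) = 0 := by
      rw [Measure.prod_prod, hnull, zero_mul]
    calc ∫⁻ p in ((⋃ i ∈ J, U i)ᶜ) ×ˢ Set.univ, ENNReal.ofReal (ρ p.1 p.2) ∂(μ.prod μ)
        = ν (((⋃ i ∈ J, U i)ᶜ) ×ˢ Set.univ) := by
          exact (withDensity_apply _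
            (((MeasurableSet.biUnion J.countable_toSet (fun i _ => hUm i))).compl.prod
              MeasurableSet.univ)).symm
      _ ≤ ν ((T N ∪ ⋃ i ∈ (Finset.range N) \ J, U i) ×ˢ Set.univ) :=
          measure_mono (Set.prod_mono hsub subset_rfl)
      _ = ν (T N ×ˢ Set.univ ∪ (⋃ i ∈ (Finset.range N) \ J, U i) ×ˢ Set.univ) := by
          rw [Set.union_prod]
      _ ≤ ν (T N ×ˢ Set.univ) + ν ((⋃ i ∈ (Finset.range N) \ J, U i) ×ˢ Set.univ) :=
          measure_union_le _ _
      _ ≤ ENNReal.ofReal e + 0 := add_le_add hN (hνac hB).le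
      _ = ENNReal.ofReal e := add_zero _

lemma semimetric_offdiag {X : Type*} (f : X → ℝ) (σ : X → X → ℝ) (hf : ∀ x, 0 ≤ f x)
    (hd : ∀ x, σ x x = 0) (ho : ∀ x y, x ≠ y → σ x y = f x + f y) :
    IsSemimetric σ := by
  have hnn : ∀ x y, 0 ≤ σ x y := by
    intro x y
    by_cases h : x = y
    · subst h; rw [hd]
    · rw [ho x y h]; exact add_nonneg (hf x) (hf y)
  refine ⟨hnn, hd, fun x y => ?_, fun x y z => ?_⟩
  · by_cases h : x = y
    · subst h; rfl
    · rw [ho x y h, ho y x (Ne.symm h)]; ring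
  · by_cases hxz : x = z
    · subst hxz; rw [hd]; exact add_nonneg (hnn x y) (hnn y x)
    · rw [ho x z hxz]
      by_cases hxy : x = y
      · subst hxy
        rw [hd, ho x z hxz]; linarith
      · by_cases hyz : y = z
        · subst hyz; rw [hd, ho x y hxy]; linarith
        · rw [ho x y hxy, ho y z hyz]; linarith [hf y]

lemma quad_ineq {X : Type*} {a b : X → X → ℝ} (ha : IsSemimetric a) (hb : IsSemimetric b)
    {e : ℝ} {x y w v : X} (hxw : b x w ≤ e) (hyv : b y v ≤ e) :
    |a x y - b x y| ≤ 4*e + (|a x w - b x w| + |a y v - b y v| + |a w v - b w v|) := by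
  obtain ⟨apos, -, asym, atri⟩ := ha
  obtain ⟨bpos, -, bsym, btri⟩ := hb
  have t1 : a x y ≤ a x w + a w v + a v y := by
    have h1 := atri x w y; have h2 := atri w v y; linarith
  have t2 : b w v ≤ b w x + b x y + b y v := by
    have h1 := btri w x v; have h2 := btri x y v; linarith
  have t3 : b x y ≤ b x w + b w v + b v y := by
    have h1 := btri x w y; have h2 := btri w v y; linarith
  have t4 : a w v ≤ a w x + a x y + a y v := by
    have h1 := atri w x v; have h2 := atri x y v; linarith
  have s1 : b w x = b x w := bsym w x
  have s2 : a w x = a x w := asym w x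
  have s3 : a v y = a y v := asym v y
  have s4 : b v y = b y v := bsym v y
  have u1 := le_abs_self (a x w - b x w); have u1' := neg_abs_le (a x w - b x w)
  have u2 := le_abs_self (a y v - b y v); have u2' := neg_abs_le (a y v - b y v)
  have u3 := le_abs_self (a w v - b w v); have u3' := neg_abs_le (a w v - b w v)
  have n1 := bpos x w; have n2 := bpos y v
  rw [abs_le]
  constructor <;> linarith

lemma mnorm_le_bound {X : Type*} [MeasurableSpace X] (μ : Measure X) (f σ : X → X → ℝ)
    (h1 : IsSemimetric σ) (h2 : Measurable (Function.uncurry σ))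
    (h3 : ∀ᵐ p ∂(μ.prod μ), |f p.1 p.2| ≤ σ p.1 p.2) :
    mnorm μ f ≤ ∫⁻ p, ENNReal.ofReal (σ p.1 p.2) ∂(μ.prod μ) :=
  sInf_le ⟨σ, h1, h2, h3, rfl⟩

lemma L1dist_le_mdist {X : Type*} [MeasurableSpace X] (μ : Measure X) (f g : X → X → ℝ) :
    L1dist μ f g ≤ mdist μ f g := by
  refine le_sInf ?_
  rintro c ⟨σ, hσ, hm, hdom, rfl⟩
  exact lintegral_mono_ae (hdom.mono fun p hp => ENNReal.ofReal_le_ofReal hp)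

lemma part1 {X : Type*} [MeasurableSpace X] [StandardBorelSpace X] (μ : Measure X)
    [IsProbabilityMeasure μ] (ρn : ℕ → X → X → ℝ) (ρ : X → X → ℝ)
    (hsem : ∀ n, IsSemimetric (ρn n)) (hmeas : ∀ n, Measurable (Function.uncurry (ρn n)))
    (hint : ∀ n, Integrable (Function.uncurry (ρn n)) (μ.prod μ))
    (hρsem : IsSemimetric ρ) (hadm : Admissible μ ρ)
    (hρint : Integrable (Function.uncurry ρ) (μ.prod μ))
    (hL1 : Tendsto (fun n => L1dist μ (ρn n) ρ) atTop (nhds 0)) :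
    Tendsto (fun n => mdist μ (ρn n) ρ) atTop (nhds 0) := by
  classical
  have hρm : Measurable (Function.uncurry ρ) := hadm.1
  have hdiagm : MeasurableSet {p : X × X | p.1 = p.2} := by
    letI := upgradeStandardBorel X
    exact measurable_fst.stronglyMeasurable.measurableSet_eq_fun
      measurable_snd.stronglyMeasurable
  rw [ENNReal.tendsto_nhds_zero]
  intro ε hε
  rcases eq_top_or_lt_top ε with hεtop | hεlt
  · exact Eventually.of_forall fun n => hεtop ▸ le_top
  have hε2ne : ε / 2 ≠ 0 := by
    simp only [ne_eq, ENNReal.div_eq_zero_iff]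
    push_neg
    exact ⟨hε.ne', ENNReal.ofNat_ne_top⟩
  have hε2top : ε / 2 ≠ ⊤ := by
    exact (ENNReal.div_lt_top hεlt.ne (by norm_num)).ne
  set r : ℝ := (ε / 2).toReal with hr
  have hrpos : 0 < r := ENNReal.toReal_pos hε2ne hε2top
  set e : ℝ := r / 8 with he_def
  have he : 0 < e := by positivity
  obtain ⟨J, U, m, hUm, hUdiam, hmU, hmpos, hmtop, hcov⟩ := exists_cover μ ρ hρsem
    ⟨hρm, hadm.2⟩ hρint he
  set A0 : Set X := (⋃ i ∈ J, U i)ᶜ with hA0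
  have hA0m : MeasurableSet A0 :=
    (MeasurableSet.biUnion J.countable_toSet fun i _ => hUm i).compl
  obtain ⟨hρnn, hρ0, hρsym, hρtri⟩ := hρsem
  set c0 : ℝ≥0∞ := (2 * m ^ 2)⁻¹ + m⁻¹ + 2 with hc0
  have hm2ne : (2 : ℝ≥0∞) * m ^ 2 ≠ 0 := by
    simp [pow_eq_zero_iff, hmpos.ne']
  have hc0top : c0 ≠ ⊤ := by
    rw [hc0]
    refine ENNReal.add_ne_top.mpr ⟨ENNReal.add_ne_top.mpr ⟨?_, ?_⟩, ENNReal.ofNat_ne_top⟩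
    · exact ENNReal.inv_ne_top.mpr hm2ne
    · exact ENNReal.inv_ne_top.mpr hmpos.ne'
  set C : ℝ≥0∞ := 2 * c0 with hC
  have hCtop : C ≠ ⊤ := ENNReal.mul_ne_top ENNReal.ofNat_ne_top hc0top
  -- main per-n bound
  have key : ∀ n, L1dist μ (ρn n) ρ ≠ ⊤ →
      mdist μ (ρn n) ρ ≤ ENNReal.ofReal (8 * e) + L1dist μ (ρn n) ρ * C := by
    intro n hLtop
    obtain ⟨hnnn, hn0, hnsym, hntri⟩ := hsem n
    set dn : X → X → ℝ := fun x y => ρn n x y - ρ x y with hdn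
    have Dm : Measurable fun p : X × X => ENNReal.ofReal |dn p.1 p.2| := by
      apply ENNReal.measurable_ofReal.comp
      exact ((hmeas n).sub hρm).abs
    set L : ℝ≥0∞ := L1dist μ (ρn n) ρ with hL
    set K : X → ℝ≥0∞ := fun x => ∫⁻ w, ENNReal.ofReal |dn x w| ∂μ with hK
    have hKm : Measurable K := Dm.lintegral_prod_right'
    set Hn1 : X → ℝ≥0∞ := fun x => ∫⁻ w, ENNReal.ofReal (ρn n x w) ∂μ with hHn1
    set Hρ : X → ℝ≥0∞ := fun x => ∫⁻ w, ENNReal.ofReal (ρ x w) ∂μ with hHρ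
    have hPnm : Measurable fun p : X × X => ENNReal.ofReal (ρn n p.1 p.2) :=
      ENNReal.measurable_ofReal.comp (hmeas n)
    have hPρm : Measurable fun p : X × X => ENNReal.ofReal (ρ p.1 p.2) :=
      ENNReal.measurable_ofReal.comp hρm
    have hHn1m : Measurable Hn1 := hPnm.lintegral_prod_right'
    have hHρm : Measurable Hρ := hPρm.lintegral_prod_right'
    set H : X → ℝ≥0∞ := fun x => Hn1 x + Hρ x with hH
    have hHm : Measurable H := hHn1m.add hHρm
    have hKL : ∫⁻ x, K x ∂μ = L := (lintegral_prod _ Dm.aemeasurable).symm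
    -- pointwise triangle-type bound through an intermediate point
    have hreal : ∀ x y w, |dn x y| ≤ |dn x w| + (ρn n y w + ρ y w) := by
      intro x y w
      have h1 := hntri x w y
      have h2 := hρtri x y w
      have h3 := hρtri x w y
      have h4 := hntri x y w
      have s1 : ρn n w y = ρn n y w := hnsym w y
      have s2 : ρ w y = ρ y w := hρsym w y
      have u1 := le_abs_self (dn x w); have u1' := neg_abs_le (dn x w)
      rw [hdn]
      simp only []
      rw [abs_le]
      constructor <;> simp only [hdn] at u1 u1' <;> linarith
    have hstep : ∀ x y, ENNReal.ofReal |dn x y| ≤ K x + H y := by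
      intro x y
      have mA : Measurable fun w => ENNReal.ofReal |dn x w| :=
        Dm.comp measurable_prodMk_left
      have mB : Measurable fun w => ENNReal.ofReal (ρn n y w) :=
        hPnm.comp measurable_prodMk_left
      have h0 : ENNReal.ofReal |dn x y| = ∫⁻ _, ENNReal.ofReal |dn x y| ∂μ := by
        rw [lintegral_const, measure_univ, mul_one]
      rw [h0]
      have hmono : (∫⁻ _, ENNReal.ofReal |dn x y| ∂μ) ≤
          ∫⁻ w, (ENNReal.ofReal |dn x w| +
            (ENNReal.ofReal (ρn n y w) + ENNReal.ofReal (ρ y w))) ∂μ := by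
        refine lintegral_mono fun w => ?_
        calc ENNReal.ofReal |dn x y|
            ≤ ENNReal.ofReal (|dn x w| + (ρn n y w + ρ y w)) :=
              ENNReal.ofReal_le_ofReal (hreal x y w)
          _ ≤ ENNReal.ofReal |dn x w| +
              (ENNReal.ofReal (ρn n y w) + ENNReal.ofReal (ρ y w)) :=
              le_trans ENNReal.ofReal_add_le (add_le_add le_rfl ENNReal.ofReal_add_le)
      refine le_trans hmono (le_of_eq ?_)
      rw [lintegral_add_left mA, lintegral_add_left mB]
    have hKH : ∀ x, K x ≤ H x := by
      intro x
      have : ∀ w, ENNReal.ofReal |dn x w| ≤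
          ENNReal.ofReal (ρn n x w) + ENNReal.ofReal (ρ x w) := by
        intro w
        calc ENNReal.ofReal |dn x w| ≤ ENNReal.ofReal (ρn n x w + ρ x w) := by
              refine ENNReal.ofReal_le_ofReal ?_
              have := abs_sub (ρn n x w) (ρ x w)
              rw [abs_of_nonneg (hnnn x w), abs_of_nonneg (hρnn x w)] at this
              exact this
          _ ≤ _ := ENNReal.ofReal_add_le
      have mB : Measurable fun w => ENNReal.ofReal (ρn n x w) :=
        hPnm.comp measurable_prodMk_left
      calc K x ≤ ∫⁻ w, (ENNReal.ofReal (ρn n x w) + ENNReal.ofReal (ρ x w)) ∂μ :=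
            lintegral_mono fun w => this w
        _ = Hn1 x + Hρ x := lintegral_add_left mB _
    -- the main estimate off A0
    have hmain : ∀ x y, x ∉ A0 → y ∉ A0 → ENNReal.ofReal |dn x y| ≤
        (ENNReal.ofReal (2*e) + K x / m + L / (2*m^2)) +
        (ENNReal.ofReal (2*e) + K y / m + L / (2*m^2)) := by
      intro x y hx hy
      rw [hA0, Set.notMem_compl_iff] at hx hy
      obtain ⟨i, hiJ, hxi⟩ := Set.mem_iUnion₂.mp hx
      obtain ⟨i', hi'J, hyi⟩ := Set.mem_iUnion₂.mp hy
      set a : ℝ≥0∞ := μ (U i) with ha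
      set b : ℝ≥0∞ := μ (U i') with hb
      have ha0 : a ≠ 0 := (lt_of_lt_of_le hmpos (hmU i hiJ)).ne'
      have hb0 : b ≠ 0 := (lt_of_lt_of_le hmpos (hmU i' hi'J)).ne'
      have hatop : a ≠ ⊤ := measure_ne_top μ _
      have hbtop : b ≠ ⊤ := measure_ne_top μ _
      set c : ℝ≥0∞ := ENNReal.ofReal |dn x y| with hc
      have mwv : Measurable fun q : X × X => (ENNReal.ofReal (4*e) +
          (ENNReal.ofReal |dn x q.1| + (ENNReal.ofReal |dn y q.2| +
            ENNReal.ofReal |dn q.1 q.2|))) := by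
        refine measurable_const.add (Measurable.add ?_ (Measurable.add ?_ Dm))
        · exact Dm.comp (measurable_const.prodMk measurable_fst)
        · exact Dm.comp (measurable_const.prodMk measurable_snd)
      have mouter : Measurable fun w => ∫⁻ v in U i', (ENNReal.ofReal (4*e) +
          (ENNReal.ofReal |dn x w| + (ENNReal.ofReal |dn y v| +
            ENNReal.ofReal |dn w v|))) ∂μ :=
        Measurable.lintegral_prod_right' (f := fun q : X × X => _) mwv
      have hpoint : ∀ w ∈ U i, ∀ v ∈ U i', c ≤ ENNReal.ofReal (4*e) +
          (ENNReal.ofReal |dn x w| + (ENNReal.ofReal |dn y v| +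
            ENNReal.ofReal |dn w v|)) := by
        intro w hw v hv
        have hq := quad_ineq ⟨hnnn, hn0, hnsym, hntri⟩ ⟨hρnn, hρ0, hρsym, hρtri⟩
          (hUdiam i x hxi w hw) (hUdiam i' y hyi v hv)
        calc c ≤ ENNReal.ofReal (4*e + (|dn x w| + |dn y v| + |dn w v|)) :=
              ENNReal.ofReal_le_ofReal hq
          _ ≤ ENNReal.ofReal (4*e) +
              ENNReal.ofReal (|dn x w| + |dn y v| + |dn w v|) := ENNReal.ofReal_add_le
          _ ≤ ENNReal.ofReal (4*e) + (ENNReal.ofReal (|dn x w| + |dn y v|) +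
              ENNReal.ofReal |dn w v|) := add_le_add le_rfl ENNReal.ofReal_add_le
          _ ≤ ENNReal.ofReal (4*e) + ((ENNReal.ofReal |dn x w| +
              ENNReal.ofReal |dn y v|) + ENNReal.ofReal |dn w v|) := by
              exact add_le_add le_rfl (add_le_add ENNReal.ofReal_add_le le_rfl)
          _ = ENNReal.ofReal (4*e) + (ENNReal.ofReal |dn x w| +
              (ENNReal.ofReal |dn y v| + ENNReal.ofReal |dn w v|)) := by ring
      -- integrate the pointwise bound over U i ×ˢ U i'
      have hstep2 : c * (a * b) ≤ ENNReal.ofReal (4*e) * (a * b) +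
          (K x * b + (K y * a + L)) := by
        have hiter : c * (a * b) = ∫⁻ w in U i, ∫⁻ _ in U i', c ∂μ ∂μ := by
          simp only [setLIntegral_const]
          ring
        rw [hiter]
        calc (∫⁻ w in U i, ∫⁻ _ in U i', c ∂μ ∂μ)
            ≤ ∫⁻ w in U i, ∫⁻ v in U i', (ENNReal.ofReal (4*e) +
              (ENNReal.ofReal |dn x w| + (ENNReal.ofReal |dn y v| +
                ENNReal.ofReal |dn w v|))) ∂μ ∂μ := by
              refine setLIntegral_mono mouter fun w hw => ?_
              have mFy : Measurable fun v => ENNReal.ofReal |dn y v| :=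
                Dm.comp measurable_prodMk_left
              have mFw : Measurable fun v => ENNReal.ofReal |dn w v| :=
                Dm.comp measurable_prodMk_left
              refine setLIntegral_mono
                (measurable_const.add (Measurable.add measurable_const (mFy.add mFw))) ?_
              exact fun v hv => hpoint w hw v hv
          _ = ∫⁻ w in U i, (ENNReal.ofReal (4*e) * b +
              (ENNReal.ofReal |dn x w| * b + ((∫⁻ v in U i',
                ENNReal.ofReal |dn y v| ∂μ) + ∫⁻ v in U i',
                ENNReal.ofReal |dn w v| ∂μ))) ∂μ := by
              refine setLIntegral_congr_fun (hUm i) (fun w hw => ?_)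
              have mFy : Measurable fun v => ENNReal.ofReal |dn y v| :=
                Dm.comp measurable_prodMk_left
              rw [lintegral_add_left measurable_const,
                lintegral_add_left measurable_const,
                lintegral_add_left mFy,
                setLIntegral_const, setLIntegral_const]
          _ = ENNReal.ofReal (4*e) * b * a +
              ((∫⁻ w in U i, ENNReal.ofReal |dn x w| ∂μ) * b +
               ((∫⁻ v in U i', ENNReal.ofReal |dn y v| ∂μ) * a +
                ∫⁻ w in U i, (∫⁻ v in U i', ENNReal.ofReal |dn w v| ∂μ) ∂μ)) := by
              have mFx : Measurable fun w => ENNReal.ofReal |dn x w| :=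
                Dm.comp measurable_prodMk_left
              have mIF : Measurable fun w => ∫⁻ v in U i', ENNReal.ofReal |dn w v| ∂μ :=
                Measurable.lintegral_prod_right' (f := fun q : X × X =>
                  ENNReal.ofReal |dn q.1 q.2|) Dm
              rw [lintegral_add_left measurable_const,
                lintegral_add_left (mFx.mul_const b),
                lintegral_add_left measurable_const,
                setLIntegral_const, setLIntegral_const,
                lintegral_mul_const _ mFx]
          _ ≤ ENNReal.ofReal (4*e) * (a * b) + (K x * b + (K y * a + L)) := by
              have h1 : (∫⁻ w in U i, ENNReal.ofReal |dn x w| ∂μ) ≤ K x :=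
                setLIntegral_le_lintegral _ _
              have h2 : (∫⁻ v in U i', ENNReal.ofReal |dn y v| ∂μ) ≤ K y :=
                setLIntegral_le_lintegral _ _
              have h3 : (∫⁻ w in U i, (∫⁻ v in U i', ENNReal.ofReal |dn w v| ∂μ) ∂μ) ≤ L := by
                have hLdef : L = ∫⁻ w, (∫⁻ v, ENNReal.ofReal |dn w v| ∂μ) ∂μ :=
                  lintegral_prod _ Dm.aemeasurable
                rw [hLdef]
                refine le_trans (setLIntegral_le_lintegral _ _) ?_
                exact lintegral_mono fun w => setLIntegral_le_lintegral _ _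
              have heq : ENNReal.ofReal (4*e) * b * a = ENNReal.ofReal (4*e) * (a * b) := by
                ring
              rw [heq]
              exact add_le_add le_rfl (add_le_add (mul_le_mul_left h1 b)
                (add_le_add (mul_le_mul_left h2 a) h3))
      -- divide by a * b
      have hdiv : c ≤ ENNReal.ofReal (4*e) + (K x / m + (K y / m + L / (m*m))) := by
        rw [← ENNReal.mul_le_mul_iff_left (mul_ne_zero ha0 hb0)
          (ENNReal.mul_ne_top hatop hbtop)]
        refine le_trans hstep2 ?_
        have hexp : (ENNReal.ofReal (4*e) + (K x / m + (K y / m + L / (m*m)))) * (a * b)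
            = ENNReal.ofReal (4*e) * (a*b) + (K x / m * (a*b) + (K y / m * (a*b) +
              L / (m*m) * (a*b))) := by ring
        rw [hexp]
        refine add_le_add le_rfl (add_le_add ?_ (add_le_add ?_ ?_))
        · calc K x * b = (K x / m * m) * b := by
                rw [ENNReal.div_mul_cancel hmpos.ne' hmtop]
            _ ≤ (K x / m * a) * b := by
                exact mul_le_mul_left (mul_le_mul_right (le_trans (hmU i hiJ) le_rfl) _) b
            _ = K x / m * (a * b) := by ring
        · calc K y * a = (K y / m * m) * a := by
                rw [ENNReal.div_mul_cancel hmpos.ne' hmtop]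
            _ ≤ (K y / m * b) * a := by
                exact mul_le_mul_left (mul_le_mul_right (hmU i' hi'J) _) a
            _ = K y / m * (a * b) := by ring
        · calc L = L / (m*m) * (m*m) := by
                rw [ENNReal.div_mul_cancel (mul_ne_zero hmpos.ne' hmpos.ne')
                  (ENNReal.mul_ne_top hmtop hmtop)]
            _ ≤ L / (m*m) * (a * b) := by
                exact mul_le_mul_right (mul_le_mul' (hmU i hiJ) (hmU i' hi'J)) _
      refine le_trans hdiv (le_of_eq ?_)
      have h4e : ENNReal.ofReal (4*e) = ENNReal.ofReal (2*e) + ENNReal.ofReal (2*e) := by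
        rw [← ENNReal.ofReal_add (by positivity) (by positivity)]
        congr 1; ring
      have hLsplit : L / (m*m) = L / (2*m^2) + L / (2*m^2) := by
        rw [ENNReal.div_add_div_same, ← two_mul, show (2:ℝ≥0∞) * m^2 = 2 * (m*m) by ring,
          ENNReal.mul_div_mul_left _ _ two_ne_zero ENNReal.ofNat_ne_top]
      rw [h4e, hLsplit]
      ring
    -- define the dominating function g
    set g : X → ℝ≥0∞ := fun x =>
      if x ∈ A0 then H x else ENNReal.ofReal (2*e) + K x / m + L / (2*m^2) + K x with hg
    have hgm : Measurable g := by
      refine Measurable.ite hA0m hHm ?_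
      exact ((measurable_const.add (hKm.div_const m)).add measurable_const).add hKm
    have hKey : ∀ x y, ENNReal.ofReal |dn x y| ≤ g x + g y := by
      intro x y
      by_cases hx : x ∈ A0 <;> by_cases hy : y ∈ A0
      · rw [hg]; simp only [if_pos hx, if_pos hy]
        exact le_trans (hstep x y) (add_le_add (hKH x) le_rfl)
      · rw [hg]; simp only [if_pos hx, if_neg hy]
        have hsymm : dn x y = dn y x := by
          rw [hdn]; simp only []; rw [hnsym x y, hρsym x y]
        rw [hsymm]
        refine le_trans (hstep y x) ?_
        rw [add_comm]
        exact add_le_add le_rfl le_add_self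
      · rw [hg]; simp only [if_neg hx, if_pos hy]
        exact le_trans (hstep x y) (add_le_add le_add_self le_rfl)
      · rw [hg]; simp only [if_neg hx, if_neg hy]
        refine le_trans (hmain x y hx hy) ?_
        exact add_le_add (le_add_right le_rfl) (le_add_right le_rfl)
    -- finiteness
    have hHint : ∫⁻ x, H x ∂μ ≠ ⊤ := by
      have e1 : ∫⁻ x, Hn1 x ∂μ = ∫⁻ p, ENNReal.ofReal (ρn n p.1 p.2) ∂(μ.prod μ) :=
        (lintegral_prod _ hPnm.aemeasurable).symm
      have e2 : ∫⁻ x, Hρ x ∂μ = ∫⁻ p, ENNReal.ofReal (ρ p.1 p.2) ∂(μ.prod μ) :=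
        (lintegral_prod _ hPρm.aemeasurable).symm
      have e3 : ∫⁻ x, H x ∂μ = (∫⁻ x, Hn1 x ∂μ) + ∫⁻ x, Hρ x ∂μ :=
        lintegral_add_left hHn1m _
      rw [e3, e1, e2]
      exact ENNReal.add_ne_top.mpr
        ⟨lint_ofReal_ne_top (hint n) (fun p => hnnn p.1 p.2),
         lint_ofReal_ne_top hρint (fun p => hρnn p.1 p.2)⟩
    have hgfin : ∀ᵐ x ∂μ, g x < ⊤ := by
      have h1 : ∀ᵐ x ∂μ, K x < ⊤ := ae_lt_top hKm (hKL ▸ hLtop)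
      have h2 : ∀ᵐ x ∂μ, H x < ⊤ := ae_lt_top hHm hHint
      filter_upwards [h1, h2] with x hx1 hx2
      rw [hg]
      by_cases hx : x ∈ A0
      · simpa [if_pos hx] using hx2
      · simp only [if_neg hx]
        refine ENNReal.add_lt_top.mpr ⟨ENNReal.add_lt_top.mpr
          ⟨ENNReal.add_lt_top.mpr ⟨ENNReal.ofReal_lt_top, ?_⟩, ?_⟩, hx1⟩
        · exact ENNReal.div_lt_top hx1.ne hmpos.ne'
        · exact ENNReal.div_lt_top hLtop hm2ne
    -- the dominating semimetric
    set fg : X → ℝ := fun x => (g x).toReal with hfg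
    have hfgm : Measurable fg := ENNReal.measurable_toReal.comp hgm
    set σ : X → X → ℝ := fun x y => if x = y then 0 else fg x + fg y with hσ
    have hσsem : IsSemimetric σ :=
      semimetric_offdiag fg σ (fun x => ENNReal.toReal_nonneg)
        (fun x => by rw [hσ]; simp) (fun x y h => by rw [hσ]; simp [h])
    have hσm : Measurable (Function.uncurry σ) := by
      have huneq : Function.uncurry σ = fun p : X × X =>
          Set.indicator {q : X × X | q.1 = q.2}ᶜ (fun q => fg q.1 + fg q.2) p := by
        funext p
        by_cases h : p.1 = p.2
        · simp [Function.uncurry, hσ, h]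
        · simp [Function.uncurry, hσ, h]
      rw [huneq]
      exact ((hfgm.comp measurable_fst).add (hfgm.comp measurable_snd)).indicator
        hdiagm.compl
    have hdom : ∀ᵐ p ∂(μ.prod μ), |dn p.1 p.2| ≤ σ p.1 p.2 := by
      set Nbad : Set X := {x | ⊤ ≤ g x} with hNbad
      have hN0 : μ Nbad = 0 := by
        rw [ae_iff] at hgfin
        simpa [hNbad, not_lt] using hgfin
      have hb1 : (μ.prod μ) {p : X × X | p.1 ∈ Nbad} = 0 := by
        have hset : {p : X × X | p.1 ∈ Nbad} = Nbad ×ˢ (Set.univ : Set X) := by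
          ext p; simp
        rw [hset, Measure.prod_prod, hN0, zero_mul]
      have hb2 : (μ.prod μ) {p : X × X | p.2 ∈ Nbad} = 0 := by
        have hset : {p : X × X | p.2 ∈ Nbad} = (Set.univ : Set X) ×ˢ Nbad := by
          ext p; simp
        rw [hset, Measure.prod_prod, hN0, mul_zero]
      have hae1 : ∀ᵐ p : X × X ∂(μ.prod μ), p.1 ∉ Nbad := by
        rw [ae_iff]; simpa using hb1
      have hae2 : ∀ᵐ p : X × X ∂(μ.prod μ), p.2 ∉ Nbad := by
        rw [ae_iff]; simpa using hb2
      filter_upwards [hae1, hae2] with p hp1 hp2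
      rw [hNbad, Set.mem_setOf_eq, not_le] at hp1 hp2
      by_cases hpq : p.1 = p.2
      · rw [hσ]; simp only [if_pos hpq]
        rw [hdn]; simp only []
        rw [hpq, hn0, hρ0]; simp
      · rw [hσ]; simp only [if_neg hpq]
        have h3 := ENNReal.toReal_mono (ENNReal.add_ne_top.mpr ⟨hp1.ne, hp2.ne⟩)
          (hKey p.1 p.2)
        rw [ENNReal.toReal_ofReal (abs_nonneg _), ENNReal.toReal_add hp1.ne hp2.ne] at h3
        exact h3
    have hbound := mnorm_le_bound μ dn σ hσsem hσm hdom
    -- estimate the integral of σ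
    have hint1 : ∫⁻ p, ENNReal.ofReal (σ p.1 p.2) ∂(μ.prod μ) ≤
        (∫⁻ x, g x ∂μ) + ∫⁻ x, g x ∂μ := by
      have step1 : ∫⁻ p, ENNReal.ofReal (σ p.1 p.2) ∂(μ.prod μ) ≤
          ∫⁻ p : X × X, (g p.1 + g p.2) ∂(μ.prod μ) := by
        refine lintegral_mono fun p => ?_
        by_cases h : p.1 = p.2
        · rw [hσ]; simp [h]
        · rw [hσ]; simp only [if_neg h]
          refine le_trans ENNReal.ofReal_add_le (add_le_add ?_ ?_) <;>
            exact ENNReal.ofReal_toReal_le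
      refine le_trans step1 (le_of_eq ?_)
      have hg1 : Measurable fun p : X × X => g p.1 := hgm.comp measurable_fst
      rw [lintegral_add_left hg1]
      have hg2 : Measurable fun p : X × X => g p.2 := hgm.comp measurable_snd
      have ha1 : AEMeasurable (fun p : X × X => g p.1) (μ.prod μ) := hg1.aemeasurable
      have ha2 : AEMeasurable (fun p : X × X => g p.2) (μ.prod μ) := hg2.aemeasurable
      congr 1
      · rw [lintegral_prod _ ha1]
        simp [lintegral_const, measure_univ]
      · rw [lintegral_prod _ ha2]
        simp [lintegral_const, measure_univ]
    -- estimate the integral of g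
    have hgint : ∫⁻ x, g x ∂μ ≤ ENNReal.ofReal (4*e) + L * c0 := by
      have hsplit : ∫⁻ x, g x ∂μ = (∫⁻ x in A0, g x ∂μ) + ∫⁻ x in A0ᶜ, g x ∂μ :=
        (lintegral_add_compl g hA0m).symm
      have hHρA0 : ∫⁻ x in A0, Hρ x ∂μ ≤ ENNReal.ofReal e := by
        refine le_trans (le_of_eq ?_) hcov
        calc ∫⁻ x in A0, Hρ x ∂μ
            = ∫⁻ x, (∫⁻ v, ENNReal.ofReal (ρ x v) ∂(μ.restrict Set.univ)) ∂(μ.restrict A0) := by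
              rw [Measure.restrict_univ]
          _ = ∫⁻ p, ENNReal.ofReal (ρ p.1 p.2) ∂((μ.restrict A0).prod (μ.restrict Set.univ)) :=
              (lintegral_prod _ hPρm.aemeasurable).symm
          _ = ∫⁻ p in A0 ×ˢ Set.univ, ENNReal.ofReal (ρ p.1 p.2) ∂(μ.prod μ) := by
              rw [Measure.prod_restrict]
      have hpart1 : ∫⁻ x in A0, g x ∂μ ≤ (ENNReal.ofReal e + L) + ENNReal.ofReal e := by
        have hcongr : ∫⁻ x in A0, g x ∂μ = ∫⁻ x in A0, H x ∂μ :=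
          setLIntegral_congr_fun hA0m (fun x hx => by
            rw [hg]; simp [hx])
        have hpt : ∀ x, Hn1 x ≤ Hρ x + K x := by
          intro x
          have hmono2 : Hn1 x ≤ ∫⁻ w, (ENNReal.ofReal (ρ x w) + ENNReal.ofReal |dn x w|) ∂μ := by
            refine lintegral_mono fun w => ?_
            calc ENNReal.ofReal (ρn n x w) ≤ ENNReal.ofReal (ρ x w + |dn x w|) := by
                  refine ENNReal.ofReal_le_ofReal ?_
                  have := le_abs_self (dn x w)
                  rw [hdn] at this; simp only [] at this; linarith
              _ ≤ _ := ENNReal.ofReal_add_le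
          refine le_trans hmono2 (le_of_eq ?_)
          exact lintegral_add_left (hPρm.comp measurable_prodMk_left) _
        have hHn1A0 : ∫⁻ x in A0, Hn1 x ∂μ ≤ (∫⁻ x in A0, Hρ x ∂μ) + L := by
          calc ∫⁻ x in A0, Hn1 x ∂μ ≤ ∫⁻ x in A0, (Hρ x + K x) ∂μ :=
                setLIntegral_mono (hHρm.add hKm) (fun x _ => hpt x)
            _ = (∫⁻ x in A0, Hρ x ∂μ) + ∫⁻ x in A0, K x ∂μ := lintegral_add_left hHρm _
            _ ≤ _ := add_le_add le_rfl
                (le_trans (setLIntegral_le_lintegral _ _) (le_of_eq hKL))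
        have hHsum : ∫⁻ x in A0, H x ∂μ =
            (∫⁻ x in A0, Hn1 x ∂μ) + ∫⁻ x in A0, Hρ x ∂μ := lintegral_add_left hHn1m _
        rw [hcongr, hHsum]
        exact add_le_add (le_trans hHn1A0 (add_le_add hHρA0 le_rfl)) hHρA0
      have hpart2 : ∫⁻ x in A0ᶜ, g x ∂μ ≤
          ENNReal.ofReal (2*e) + L * m⁻¹ + L * (2*m^2)⁻¹ + L := by
        have hcongr : ∫⁻ x in A0ᶜ, g x ∂μ =
            ∫⁻ x in A0ᶜ, (ENNReal.ofReal (2*e) + K x / m + L / (2*m^2) + K x) ∂μ :=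
          setLIntegral_congr_fun hA0m.compl (fun x hx => by
            rw [hg]; simp only [if_neg (Set.notMem_of_mem_compl hx)])
        rw [hcongr]
        refine le_trans (setLIntegral_le_lintegral _ _) ?_
        rw [lintegral_add_left (f := fun x => ENNReal.ofReal (2*e) + K x / m + L / (2*m^2)) ((measurable_const.add (hKm.div_const m)).add
          measurable_const), lintegral_add_left (f := fun x => ENNReal.ofReal (2*e) + K x / m) (measurable_const.add (hKm.div_const m)),
          lintegral_add_left measurable_const, lintegral_const, measure_univ, mul_one,
          lintegral_const, measure_univ, mul_one]
        have hKdiv : ∫⁻ x, K x / m ∂μ = L * m⁻¹ := by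
          simp only [div_eq_mul_inv]
          rw [lintegral_mul_const _ hKm, hKL]
        rw [hKdiv, hKL]
        refine add_le_add (add_le_add (add_le_add le_rfl le_rfl) (le_of_eq ?_)) le_rfl
        rw [div_eq_mul_inv]
      rw [hsplit]
      have hofReal : ENNReal.ofReal e + ENNReal.ofReal e + ENNReal.ofReal (2*e)
          = ENNReal.ofReal (4*e) := by
        rw [← ENNReal.ofReal_add he.le he.le, ← ENNReal.ofReal_add (by positivity)
          (by positivity)]
        congr 1; ring
      calc (∫⁻ x in A0, g x ∂μ) + ∫⁻ x in A0ᶜ, g x ∂μ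
          ≤ ((ENNReal.ofReal e + L) + ENNReal.ofReal e) +
            (ENNReal.ofReal (2*e) + L * m⁻¹ + L * (2*m^2)⁻¹ + L) := add_le_add hpart1 hpart2
        _ = ENNReal.ofReal (4*e) + L * c0 := by
            rw [← hofReal, hc0]
            ring
    calc mdist μ (ρn n) ρ
        ≤ ∫⁻ p, ENNReal.ofReal (σ p.1 p.2) ∂(μ.prod μ) := hbound
      _ ≤ (∫⁻ x, g x ∂μ) + ∫⁻ x, g x ∂μ := hint1
      _ ≤ (ENNReal.ofReal (4*e) + L * c0) + (ENNReal.ofReal (4*e) + L * c0) :=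
          add_le_add hgint hgint
      _ = ENNReal.ofReal (8*e) + L * C := by
          have h8 : ENNReal.ofReal (8*e) = ENNReal.ofReal (4*e) + ENNReal.ofReal (4*e) := by
            rw [← ENNReal.ofReal_add (by positivity) (by positivity)]
            congr 1; ring
          rw [h8, hC]
          ring
  -- conclude using the per-n bound
  have h8e : ENNReal.ofReal (8 * e) = ε / 2 := by
    rw [show 8 * e = r by rw [he_def]; ring]
    exact ENNReal.ofReal_toReal hε2top
  have hmulto : Tendsto (fun n => L1dist μ (ρn n) ρ * C) atTop (nhds 0) := by
    have h := ENNReal.Tendsto.mul_const hL1 (Or.inr hCtop)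
    simpa using h
  have hev1 : ∀ᶠ n in atTop, L1dist μ (ρn n) ρ * C ≤ ε / 2 :=
    (ENNReal.tendsto_nhds_zero.mp hmulto) _ (pos_iff_ne_zero.mpr hε2ne)
  have hev2 : ∀ᶠ n in atTop, L1dist μ (ρn n) ρ ≠ ⊤ := by
    have h := (ENNReal.tendsto_nhds_zero.mp hL1) 1 zero_lt_one
    exact h.mono fun n hn => ne_top_of_le_ne_top ENNReal.one_ne_top hn
  filter_upwards [hev1, hev2] with n h1 h2
  calc mdist μ (ρn n) ρ ≤ ENNReal.ofReal (8 * e) + L1dist μ (ρn n) ρ * C := key n h2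
    _ ≤ ε / 2 + ε / 2 := by rw [h8e]; exact add_le_add le_rfl h1
    _ = ε := ENNReal.add_halves ε


/-- a sequence of summable measurable semimetrics converging in
`L¹(X×X, μ×μ)` to an admissible summable semimetric also converges to it in the m-norm;
consequently, a set of admissible summable semimetrics is compact in the m-norm if and
only if it is compact in `L¹(X×X, μ×μ)`. -/
theorem statement10 {X : Type*} [MeasurableSpace X] [StandardBorelSpace X]
    (μ : Measure X) [IsProbabilityMeasure μ] :
    (∀ (ρn : ℕ → X → X → ℝ) (ρ : X → X → ℝ),
      (∀ n, IsSemimetric (ρn n)) → (∀ n, Measurable (Function.uncurry (ρn n))) →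
      (∀ n, Integrable (Function.uncurry (ρn n)) (μ.prod μ)) →
      IsSemimetric ρ → Admissible μ ρ → Integrable (Function.uncurry ρ) (μ.prod μ) →
      Tendsto (fun n => L1dist μ (ρn n) ρ) atTop (nhds 0) →
      Tendsto (fun n => mdist μ (ρn n) ρ) atTop (nhds 0)) ∧
    ∀ M : Set (X → X → ℝ),
      (∀ σ ∈ M, IsSemimetric σ ∧ Admissible μ σ ∧
        Integrable (Function.uncurry σ) (μ.prod μ)) →
      (SeqCompactIn (mdist μ) M ↔ SeqCompactIn (L1dist μ) M) := by
  constructor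
  · exact fun ρn ρ h1 h2 h3 h4 h5 h6 h7 => part1 μ ρn ρ h1 h2 h3 h4 h5 h6 h7
  · intro M hM
    constructor
    · intro hc u hu
      obtain ⟨gg, hgM, φ, hφ, htd⟩ := hc u hu
      refine ⟨gg, hgM, φ, hφ, ?_⟩
      rw [ENNReal.tendsto_nhds_zero] at htd ⊢
      intro ε hε
      exact (htd ε hε).mono fun k hk => le_trans (L1dist_le_mdist μ _ _) hk
    · intro hc u hu
      obtain ⟨gg, hgM, φ, hφ, htd⟩ := hc u hu
      refine ⟨gg, hgM, φ, hφ, ?_⟩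
      exact part1 μ (fun k => u (φ k)) gg
        (fun k => (hM _ (hu _)).1)
        (fun k => (hM _ (hu _)).2.1.1)
        (fun k => (hM _ (hu _)).2.2)
        (hM gg hgM).1 (hM gg hgM).2.1 (hM gg hgM).2.2 htd
end

section
/- Let (X, μ) be a standard Borel probability space with μ nonatomic, and let ρ be a summable measurable metric on X. For a finite partition λ of X into n measurable sets Δ₁, …, Δ_n of equal measure 1/n, let A_{ρ,λ} be the n×n matrix with entries A_{ρ,λ}(i,j) = n² ∫_{Δ_i×Δ_j} ρ d(μ×μ). If the infimum of (1/n)·tr A_{ρ,λ}, taken over all n and all partitions λ of X into n parts of equal measure, equals 0, then ρ is an admissible metric. -/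
open MeasureTheory Filter Function Set
open scoped ENNReal

/-- if the infimum over all `n` and all partitions of `X` into `n` parts of
equal measure of the normalized trace `(1/n)·tr A_{ρ,λ} = n ∑_i ∫_{Δ_i×Δ_i} ρ` is `0`,
then the summable measurable metric `ρ` is admissible. -/
theorem statement15 {X : Type*} [MeasurableSpace X] [StandardBorelSpace X]
    (μ : Measure X) [IsProbabilityMeasure μ] [NullSingletonClass μ]
    (ρ : X → X → ℝ) (hρ : IsMetricFun ρ) (hmeas : Measurable (Function.uncurry ρ))
    (hint : Integrable (Function.uncurry ρ) (μ.prod μ))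
    (hinf : ∀ c : ℝ, 0 < c → ∃ (n : ℕ) (Δ : Fin n → Set X), 1 ≤ n ∧
      (∀ i, MeasurableSet (Δ i)) ∧ (⋃ i, Δ i) = Set.univ ∧
      (∀ i j, i ≠ j → Disjoint (Δ i) (Δ j)) ∧ (∀ i, μ (Δ i) = (n : ℝ≥0∞)⁻¹) ∧
      (n : ℝ≥0∞) *
          (∑ i, ∫⁻ q in Δ i ×ˢ Δ i, ENNReal.ofReal (ρ q.1 q.2) ∂(μ.prod μ)) <
        ENNReal.ofReal c) :
    Admissible μ ρ := by
  classical
  letI := upgradeStandardBorel X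
  obtain ⟨⟨hnn, hrefl, hsymm, htri⟩, hsep⟩ := hρ
  refine ⟨hmeas, ?_⟩
  -- the sequence of scales
  set ε : ℕ → ℝ := fun m => (1 / 2 : ℝ) ^ m / 4 with hεdef
  have hεpos : ∀ m, 0 < ε m := by intro m; positivity
  have hεle : ∀ m, ε m ≤ 1 / 4 := by
    intro m
    have h1 : (1 / 2 : ℝ) ^ m ≤ 1 := pow_le_one₀ (by norm_num) (by norm_num)
    simp only [hεdef]; linarith
  -- choose the partitions
  choose n Δ hn hΔm hΔcov hΔdisj hΔμ htr using fun m => hinf (ε m ^ 3) (by positivity)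
  have hn0 : ∀ m, (n m : ℝ≥0∞) ≠ 0 := by
    intro m; have := hn m; simp only [ne_eq, Nat.cast_eq_zero]; omega
  have hntop : ∀ m, (n m : ℝ≥0∞) ≠ ∞ := fun m => ENNReal.natCast_ne_top _
  have hρmeas2 : Measurable fun p : X × X => ENNReal.ofReal (ρ p.1 p.2) :=
    ENNReal.measurable_ofReal.comp hmeas
  -- local averages
  set F : ∀ m, Fin (n m) → X → ℝ≥0∞ :=
    fun m i x => ∫⁻ y in Δ m i, ENNReal.ofReal (ρ x y) ∂μ with hFdef
  have hFmeas : ∀ m i, Measurable (F m i) := fun m i =>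
    Measurable.lintegral_prod_right (f := fun x y => ENNReal.ofReal (ρ x y)) hρmeas2
  -- threshold
  set a : ℕ → ℝ≥0∞ := fun m => ENNReal.ofReal (ε m ^ 2) * (n m : ℝ≥0∞)⁻¹ with hadef
  -- bad sets
  set Bad : ℕ → Set X := fun m => ⋃ i, Δ m i ∩ {x | a m ≤ F m i x} with hBdef
  have hBadm : ∀ m, MeasurableSet (Bad m) := by
    intro m
    exact MeasurableSet.iUnion fun i =>
      (hΔm m i).inter (measurableSet_le measurable_const (hFmeas m i))
  -- split the product integrals
  have hsplit : ∀ m i, ∫⁻ q in Δ m i ×ˢ Δ m i, ENNReal.ofReal (ρ q.1 q.2) ∂(μ.prod μ) =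
      ∫⁻ x in Δ m i, F m i x ∂μ := by
    intro m i
    rw [← Measure.prod_restrict, lintegral_prod _ hρmeas2.aemeasurable]
  -- measure of the bad sets
  have hBadμ : ∀ m, μ (Bad m) ≤ ENNReal.ofReal (ε m) := by
    intro m
    have hT : (n m : ℝ≥0∞) * ∑ i, ∫⁻ x in Δ m i, F m i x ∂μ <
        ENNReal.ofReal (ε m ^ 3) := by
      have := htr m
      simp only [hsplit] at this ⊢
      exact this
    have hmark : ∀ i, a m * μ (Δ m i ∩ {x | a m ≤ F m i x}) ≤ ∫⁻ x in Δ m i, F m i x ∂μ := by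
      intro i
      have h1 := mul_meas_ge_le_lintegral₀ (μ := μ.restrict (Δ m i))
        ((hFmeas m i).aemeasurable) (a m)
      rwa [Measure.restrict_apply (measurableSet_le measurable_const (hFmeas m i)),
        Set.inter_comm] at h1
    have h2 : a m * μ (Bad m) ≤ ∑ i, ∫⁻ x in Δ m i, F m i x ∂μ := by
      calc a m * μ (Bad m) ≤ a m * ∑' i, μ (Δ m i ∩ {x | a m ≤ F m i x}) := by
            exact mul_le_mul_right (measure_iUnion_le _) _
        _ = ∑ i, a m * μ (Δ m i ∩ {x | a m ≤ F m i x}) := by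
            rw [tsum_fintype, Finset.mul_sum]
        _ ≤ ∑ i, ∫⁻ x in Δ m i, F m i x ∂μ := Finset.sum_le_sum fun i _ => hmark i
    have h3 : ∑ i, ∫⁻ x in Δ m i, F m i x ∂μ ≤ (n m : ℝ≥0∞)⁻¹ * ENNReal.ofReal (ε m ^ 3) := by
      have := ENNReal.inv_mul_cancel (hn0 m) (hntop m)
      calc ∑ i, ∫⁻ x in Δ m i, F m i x ∂μ
          = (n m : ℝ≥0∞)⁻¹ * ((n m : ℝ≥0∞) * ∑ i, ∫⁻ x in Δ m i, F m i x ∂μ) := by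
            rw [← mul_assoc, this, one_mul]
        _ ≤ (n m : ℝ≥0∞)⁻¹ * ENNReal.ofReal (ε m ^ 3) := mul_le_mul_right hT.le _
    have h4 : (n m : ℝ≥0∞)⁻¹ * (ENNReal.ofReal (ε m ^ 2) * μ (Bad m)) ≤
        (n m : ℝ≥0∞)⁻¹ * ENNReal.ofReal (ε m ^ 3) := by
      calc (n m : ℝ≥0∞)⁻¹ * (ENNReal.ofReal (ε m ^ 2) * μ (Bad m))
          = a m * μ (Bad m) := by rw [hadef]; ring
        _ ≤ _ := h2.trans h3
    have h5 : ENNReal.ofReal (ε m ^ 2) * μ (Bad m) ≤ ENNReal.ofReal (ε m ^ 3) :=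
      (ENNReal.mul_le_mul_iff_right (ENNReal.inv_ne_zero.mpr (hntop m))
        (ENNReal.inv_ne_top.mpr (hn0 m))).mp h4
    have h6 : ENNReal.ofReal (ε m ^ 3) = ENNReal.ofReal (ε m ^ 2) * ENNReal.ofReal (ε m) := by
      rw [← ENNReal.ofReal_mul (by positivity)]; ring_nf
    rw [h6] at h5
    exact (ENNReal.mul_le_mul_iff_right (by positivity) ENNReal.ofReal_ne_top).mp h5
  -- Borel–Cantelli
  have hBC : μ (Filter.limsup Bad Filter.atTop) = 0 := by
    apply measure_limsup_atTop_eq_zero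
    have hb : ∀ m, μ (Bad m) ≤ (2 : ℝ≥0∞)⁻¹ ^ m := by
      intro m
      refine (hBadμ m).trans ?_
      have : ENNReal.ofReal (ε m) ≤ ENNReal.ofReal ((1 / 2 : ℝ) ^ m) :=
        ENNReal.ofReal_le_ofReal (by simp only [hεdef]; nlinarith [pow_pos (by norm_num : (0:ℝ) < 1/2) m])
      refine this.trans ?_
      rw [ENNReal.ofReal_pow (by norm_num)]
      gcongr
      rw [show (1 / 2 : ℝ) = (2 : ℝ)⁻¹ by norm_num,
        ENNReal.ofReal_inv_of_pos (by norm_num), ENNReal.ofReal_ofNat]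
    refine ne_top_of_le_ne_top ?_ (ENNReal.tsum_le_tsum hb)
    rw [ENNReal.tsum_geometric]
    simp [ENNReal.one_sub_inv_two]
  -- pairwise estimate for good points
  have key : ∀ m i x d, x ∈ Δ m i → d ∈ Δ m i → F m i x < a m → F m i d < a m →
      ρ x d < 2 * ε m := by
    intro m i x d hx hd hFx hFd
    have hset : ∀ z : X, {y | ENNReal.ofReal (ε m) ≤ ENNReal.ofReal (ρ z y)} =
        {y | ε m ≤ ρ z y} := by
      intro z; ext y; simp [ENNReal.ofReal_le_ofReal_iff (hnn z y)]
    have ha0 : ENNReal.ofReal (ε m) ≠ 0 := by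
      simp [ENNReal.ofReal_eq_zero, not_le, hεpos m]
    have hasplit : a m = ENNReal.ofReal (ε m) * (ENNReal.ofReal (ε m) * (n m : ℝ≥0∞)⁻¹) := by
      rw [hadef, ← mul_assoc, ← ENNReal.ofReal_mul (hεpos m).le]; ring_nf
    have hmk : ∀ z : X, z ∈ Δ m i → F m i z < a m →
        μ ({y | ε m ≤ ρ z y} ∩ Δ m i) < ENNReal.ofReal (ε m) * (n m : ℝ≥0∞)⁻¹ := by
      intro z hz hFz
      have hmz : Measurable fun y => ENNReal.ofReal (ρ z y) :=
        hρmeas2.comp (measurable_prodMk_left)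
      have h1 := mul_meas_ge_le_lintegral₀ (μ := μ.restrict (Δ m i))
        hmz.aemeasurable (ENNReal.ofReal (ε m))
      rw [Measure.restrict_apply (by
        rw [hset]; exact measurableSet_le measurable_const (hmeas.comp measurable_prodMk_left)),
        hset] at h1
      have h2 : ENNReal.ofReal (ε m) * μ ({y | ε m ≤ ρ z y} ∩ Δ m i) <
          ENNReal.ofReal (ε m) * (ENNReal.ofReal (ε m) * (n m : ℝ≥0∞)⁻¹) := by
        rw [← hasplit]; exact lt_of_le_of_lt h1 hFz
      exact (ENNReal.mul_lt_mul_iff_right ha0 ENNReal.ofReal_ne_top).mp h2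
    have hx' := hmk x hx hFx
    have hd' := hmk d hd hFd
    -- find a common close point
    have hy : ∃ y ∈ Δ m i, ρ x y < ε m ∧ ρ d y < ε m := by
      by_contra hcon
      push_neg at hcon
      have hsub : Δ m i ⊆ ({y | ε m ≤ ρ x y} ∩ Δ m i) ∪ ({y | ε m ≤ ρ d y} ∩ Δ m i) := by
        intro y hy
        rcases le_or_gt (ε m) (ρ x y) with h | h
        · exact Or.inl ⟨h, hy⟩
        · exact Or.inr ⟨hcon y hy h, hy⟩
      have hlt : μ (Δ m i) < (n m : ℝ≥0∞)⁻¹ := by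
        calc μ (Δ m i) ≤ μ (({y | ε m ≤ ρ x y} ∩ Δ m i) ∪ ({y | ε m ≤ ρ d y} ∩ Δ m i)) :=
              measure_mono hsub
          _ ≤ μ ({y | ε m ≤ ρ x y} ∩ Δ m i) + μ ({y | ε m ≤ ρ d y} ∩ Δ m i) :=
              measure_union_le _ _
          _ < ENNReal.ofReal (ε m) * (n m : ℝ≥0∞)⁻¹ + ENNReal.ofReal (ε m) * (n m : ℝ≥0∞)⁻¹ :=
              ENNReal.add_lt_add hx' hd'
          _ = (2 * ENNReal.ofReal (ε m)) * (n m : ℝ≥0∞)⁻¹ := by ring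
          _ ≤ 1 * (n m : ℝ≥0∞)⁻¹ := by
              gcongr
              calc (2 : ℝ≥0∞) * ENNReal.ofReal (ε m) = ENNReal.ofReal (2 * ε m) := by
                    rw [ENNReal.ofReal_mul (by norm_num), ENNReal.ofReal_ofNat]
                _ ≤ 1 := by
                    rw [show (1 : ℝ≥0∞) = ENNReal.ofReal 1 by simp]
                    exact ENNReal.ofReal_le_ofReal (by linarith [hεle m])
          _ = (n m : ℝ≥0∞)⁻¹ := one_mul _
      rw [hΔμ m i] at hlt
      exact lt_irrefl _ hlt
    obtain ⟨y, _, hxy, hdy⟩ := hy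
    calc ρ x d ≤ ρ x y + ρ y d := htri x y d
      _ = ρ x y + ρ d y := by rw [hsymm y d]
      _ < ε m + ε m := add_lt_add hxy hdy
      _ = 2 * ε m := by ring
  -- the countable set of chosen good points
  set Q : ∀ m, Fin (n m) → Set X := fun m i => {x | x ∈ Δ m i ∧ F m i x < a m} with hQdef
  set D : Set X := ⋃ m, ⋃ i, if h : (Q m i).Nonempty then {h.choose} else ∅ with hDdef
  have hDcount : D.Countable := by
    refine Set.countable_iUnion fun m => Set.countable_iUnion fun i => ?_
    split <;> simp
  have hDapprox : ∀ m i x, x ∈ Q m i → ∃ d ∈ D, ρ x d < 2 * ε m := by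
    intro m i x hx
    have hne : (Q m i).Nonempty := ⟨x, hx⟩
    refine ⟨hne.choose, ?_, ?_⟩
    · rw [hDdef]
      refine Set.mem_iUnion.mpr ⟨m, Set.mem_iUnion.mpr ⟨i, ?_⟩⟩
      rw [dif_pos hne]; rfl
    · exact key m i x hne.choose hx.1 hne.choose_spec.1 hx.2 hne.choose_spec.2
  -- the good set
  refine ⟨(Filter.limsup Bad Filter.atTop)ᶜ ∪ D, ?_, ?_, D, Set.subset_union_right, hDcount, ?_⟩
  · exact ((MeasurableSet.measurableSet_limsup hBadm).compl).union hDcount.measurableSet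
  · rw [Set.compl_union, compl_compl]
    exact measure_mono_null Set.inter_subset_left hBC
  · rintro x (hx | hx) ε' hε'
    · -- x is eventually good
      have hxx : ∀ᶠ m in Filter.atTop, x ∉ Bad m := by
        have := hx
        rw [Set.mem_compl_iff, Filter.limsup_eq_iInf_iSup_of_nat] at this
        simp only [Set.iInf_eq_iInter, Set.iSup_eq_iUnion, Set.mem_iInter, Set.mem_iUnion,
          not_forall, not_exists] at this
        obtain ⟨M, hM⟩ := this
        exact Filter.eventually_atTop.mpr ⟨M, fun m hm => hM m hm⟩
      obtain ⟨M, hM⟩ := Filter.eventually_atTop.mp hxx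
      obtain ⟨m0, hm0⟩ := exists_pow_lt_of_lt_one hε' (by norm_num : (1 / 2 : ℝ) < 1)
      set m := max M m0 with hm
      have hεsmall : 2 * ε m < ε' := by
        have h1 : (1 / 2 : ℝ) ^ m ≤ (1 / 2 : ℝ) ^ m0 :=
          pow_le_pow_of_le_one (by norm_num) (by norm_num) (le_max_right _ _)
        have : 2 * ε m = (1 / 2 : ℝ) ^ m / 2 := by simp only [hεdef]; ring
        rw [this]; linarith
      have hxB : x ∉ Bad m := hM m (le_max_left _ _)
      obtain ⟨i, hxi⟩ : ∃ i, x ∈ Δ m i := by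
        have : x ∈ ⋃ i, Δ m i := by rw [hΔcov m]; trivial
        exact Set.mem_iUnion.mp this
      have hFx : F m i x < a m := by
        by_contra hcon
        exact hxB (Set.mem_iUnion.mpr ⟨i, hxi, not_lt.mp hcon⟩)
      obtain ⟨d, hd, hρd⟩ := hDapprox m i x ⟨hxi, hFx⟩
      exact ⟨d, hd, hρd.trans hεsmall⟩
    · exact ⟨x, hx, by rw [hrefl]; exact hε'⟩
end

section
/- Let (X, μ) be a standard Borel probability space with μ nonatomic, let ρ be an admissible summable metric on X, and let λ₁, λ₂, … be a sequence of finite measurable partitions of X, with λ_k consisting of n_k parts of equal measure, satisfying the Lebesgue density property: for every measurable set Y ⊆ X, for μ-almost every y ∈ Y, the ratio μ(Y ∩ λ_k(y))/μ(λ_k(y)) tends to 1 as k → ∞, where λ_k(y) is the element of λ_k containing y. Then (1/n_k)·tr A_{ρ,λ_k} → 0 as k → ∞, where A_{ρ,λ}(i,j) = n² ∫_{Δ_i×Δ_j} ρ d(μ×μ) for a partition λ of X into n parts Δ₁,…,Δ_n of equal measure. -/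
open MeasureTheory Filter Function Set
open scoped ENNReal Topology

lemma exists_cover_s16 {X : Type*} [MeasurableSpace X] (μ : Measure X) [IsProbabilityMeasure μ]
    (ρ : X → X → ℝ)
    (hsymm : ∀ x y, ρ x y = ρ y x) (htri : ∀ x y z, ρ x z ≤ ρ x y + ρ y z)
    (hmρ : Measurable (Function.uncurry ρ))
    (S : Set X) (hSc : μ Sᶜ = 0) (hsep : SeparableOn ρ S)
    (h : X → ℝ≥0∞) (hh : Measurable h) (hfin : ∫⁻ x, h x ∂μ ≠ ⊤)
    (ε₀ : ℝ) (hε₀ : 0 < ε₀) (η : ℝ≥0∞) (hη : 0 < η) :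
    ∃ M : ℕ, ∃ P : Fin M → Set X,
      (∀ j, MeasurableSet (P j)) ∧ Pairwise (Disjoint on P) ∧
      (∀ j, ∀ x ∈ P j, ∀ y ∈ P j, ρ x y < ε₀) ∧
      ∫⁻ x, ((⋃ j, P j)ᶜ).indicator h x ∂μ ≤ η := by
  obtain ⟨D₀, hDS, hDc, hdense⟩ := hsep
  -- S is nonempty
  have hSne : S.Nonempty := by
    rcases S.eq_empty_or_nonempty with hS | hS
    · exfalso
      have : μ Sᶜ = 1 := by rw [hS, Set.compl_empty, measure_univ]
      rw [hSc] at this; exact zero_ne_one this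
    · exact hS
  obtain ⟨x₀, hx₀⟩ := hSne
  obtain ⟨y₀, hy₀, -⟩ := hdense x₀ hx₀ 1 one_pos
  obtain ⟨u, hu⟩ := hDc.exists_eq_range ⟨y₀, hy₀⟩
  set V : ℕ → Set X := fun i => {y | ρ y (u i) < ε₀ / 2} with hV
  have hVmeas : ∀ i, MeasurableSet (V i) := by
    intro i
    have : Measurable fun y => ρ y (u i) := hmρ.comp (measurable_id.prodMk measurable_const)
    exact this measurableSet_Iio
  have hSV : S ⊆ ⋃ i, V i := by
    intro x hx
    obtain ⟨y, hyD, hlt⟩ := hdense x hx (ε₀ / 2) (by positivity)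
    rw [hu] at hyD
    obtain ⟨i, rfl⟩ := hyD
    exact mem_iUnion.mpr ⟨i, hlt⟩
  set W : ℕ → Set X := fun m => ⋃ i, ⋃ _ : i ≤ m, V i with hW
  have hWmeas : ∀ m, MeasurableSet (W m) :=
    fun m => MeasurableSet.iUnion fun i => MeasurableSet.iUnion fun _ => hVmeas i
  set F : ℕ → X → ℝ≥0∞ := fun m x => ((W m)ᶜ).indicator h x with hF
  have hFt : Tendsto (fun m => ∫⁻ x, F m x ∂μ) atTop (𝓝 (∫⁻ _ : X, (0:ℝ≥0∞) ∂μ)) := by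
    apply tendsto_lintegral_of_dominated_convergence h
    · exact fun m => hh.indicator (hWmeas m).compl
    · exact fun m => Filter.Eventually.of_forall fun x => Set.indicator_le_self _ _ x
    · exact hfin
    · have hae : ∀ᵐ x ∂μ, x ∈ ⋃ i, V i := by
        refine ae_iff.mpr (measure_mono_null ?_ hSc)
        intro x hx
        exact fun hxS => hx (hSV hxS)
      filter_upwards [hae] with x hx
      obtain ⟨i, hi⟩ := mem_iUnion.mp hx
      apply tendsto_const_nhds.congr'
      filter_upwards [eventually_ge_atTop i] with m hm
      have hxW : x ∈ W m := mem_iUnion.mpr ⟨i, mem_iUnion.mpr ⟨hm, hi⟩⟩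
      exact (Set.indicator_of_notMem (Set.notMem_compl_iff.mpr hxW) h).symm
  rw [lintegral_zero] at hFt
  obtain ⟨m, hm⟩ := (ENNReal.tendsto_nhds_zero.mp hFt η hη).exists
  -- disjointify
  set P0 : ℕ → Set X := fun i => V i \ ⋃ l, ⋃ _ : l < i, V l with hP0
  have hP0sub : ∀ i, P0 i ⊆ V i := fun i => Set.diff_subset
  have hP0m : ∀ i, MeasurableSet (P0 i) := fun i =>
    (hVmeas i).diff (MeasurableSet.iUnion fun l => MeasurableSet.iUnion fun _ => hVmeas l)
  have hP0d : ∀ i j : ℕ, i < j → Disjoint (P0 i) (P0 j) := by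
    intro i j hij
    rw [Set.disjoint_left]
    intro x hxi hxj
    exact hxj.2 (mem_iUnion.mpr ⟨i, mem_iUnion.mpr ⟨hij, hP0sub i hxi⟩⟩)
  refine ⟨m + 1, fun j => P0 j, fun j => hP0m j, ?_, ?_, ?_⟩
  · intro i j hij
    rcases lt_or_gt_of_ne (fun hc : (i:ℕ) = (j:ℕ) => hij (Fin.ext hc)) with hlt | hlt
    · exact hP0d _ _ hlt
    · exact (hP0d _ _ hlt).symm
  · intro j x hx y hy
    have hx' := hP0sub j hx
    have hy' := hP0sub j hy
    calc ρ x y ≤ ρ x (u j) + ρ (u j) y := htri x (u j) y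
      _ = ρ x (u j) + ρ y (u j) := by rw [hsymm (u j) y]
      _ < ε₀ / 2 + ε₀ / 2 := add_lt_add hx' hy'
      _ = ε₀ := add_halves ε₀
  · refine le_trans (lintegral_mono fun x => ?_) hm
    apply Set.indicator_le_indicator_of_subset
    · apply compl_subset_compl.mpr
      intro x hx
      obtain ⟨i, hi⟩ := mem_iUnion.mp hx
      obtain ⟨him, hiV⟩ := mem_iUnion.mp hi
      have hex : ∃ l, x ∈ V l := ⟨i, hiV⟩
      have hfind := Nat.find_spec hex
      have hle : Nat.find hex ≤ i := Nat.find_min' hex hiV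
      refine mem_iUnion.mpr ⟨⟨Nat.find hex, by omega⟩, hfind, ?_⟩
      intro hc
      obtain ⟨l, hl⟩ := mem_iUnion.mp hc
      obtain ⟨hlt, hlV⟩ := mem_iUnion.mp hl
      exact Nat.find_min hex hlt hlV
    · exact fun a => zero_le

private theorem statement16_aux {X : Type*} [MeasurableSpace X]
    (μ : Measure X) [IsProbabilityMeasure μ]
    (ρ : X → X → ℝ)
    (hnn : ∀ x y, 0 ≤ ρ x y) (hsymm : ∀ x y, ρ x y = ρ y x)
    (htri : ∀ x y z, ρ x z ≤ ρ x y + ρ y z)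
    (hmρ : Measurable (Function.uncurry ρ))
    (S : Set X) (hSc : μ Sᶜ = 0) (hsep : SeparableOn ρ S)
    (hint : Integrable (Function.uncurry ρ) (μ.prod μ))
    (n : ℕ → ℕ) (hn : ∀ k, 1 ≤ n k) (parts : (k : ℕ) → Fin (n k) → Set X)
    (hmeas : ∀ k i, MeasurableSet (parts k i))
    (hdisj : ∀ k, ∀ i j, i ≠ j → Disjoint (parts k i) (parts k j))
    (heq : ∀ k i, μ (parts k i) = ((n k : ℝ≥0∞))⁻¹)
    (idx : (k : ℕ) → X → Fin (n k)) (hidx : ∀ k x, x ∈ parts k (idx k x))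
    (hdensity : ∀ Y : Set X, MeasurableSet Y → ∀ᵐ y ∂μ, y ∈ Y →
      Tendsto (fun k => (n k : ℝ≥0∞) * μ (Y ∩ parts k (idx k y))) atTop (nhds 1)) :
    Tendsto
      (fun k => (n k : ℝ≥0∞) *
        ∑ i, ∫⁻ q in parts k i ×ˢ parts k i, ENNReal.ofReal (ρ q.1 q.2) ∂(μ.prod μ))
      atTop (nhds 0) := by
  -- basic objects
  set f : X × X → ℝ≥0∞ := fun p => ENNReal.ofReal (ρ p.1 p.2) with hfdef
  have hfm : Measurable f := ENNReal.measurable_ofReal.comp hmρ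
  set h : X → ℝ≥0∞ := fun x => ∫⁻ y, ENNReal.ofReal (ρ x y) ∂μ with hhdef
  have hhm : Measurable h :=
    Measurable.lintegral_prod_right (f := fun x y => ENNReal.ofReal (ρ x y))
      (ENNReal.measurable_ofReal.comp hmρ)
  have hfprod : ∫⁻ p, f p ∂(μ.prod μ) ≠ ⊤ := by
    have h1 : ∫⁻ p, ENNReal.ofReal (Function.uncurry ρ p) ∂(μ.prod μ) < ⊤ :=
      (hasFiniteIntegral_iff_ofReal
        (Filter.Eventually.of_forall fun (p : X × X) => hnn p.1 p.2)).mp hint.hasFiniteIntegral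
    exact h1.ne
  have hfin : ∫⁻ x, h x ∂μ ≠ ⊤ := by
    rw [hhdef]
    rw [← MeasureTheory.lintegral_prod f hfm.aemeasurable]
    exact hfprod
  have hn0 : ∀ k, ((n k : ℝ≥0∞)) ≠ 0 := fun k => by
    have := hn k
    simp only [ne_eq, Nat.cast_eq_zero]; omega
  have hntop : ∀ k, ((n k : ℝ≥0∞)) ≠ ⊤ := fun k => ENNReal.natCast_ne_top _
  -- key pointwise inequality: ρ(x,y) ≤ h(x) + h(y)
  have hkey : ∀ x y, ENNReal.ofReal (ρ x y) ≤ h x + h y := by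
    intro x y
    have m1 : Measurable fun z => ENNReal.ofReal (ρ x z) :=
      ENNReal.measurable_ofReal.comp (hmρ.comp measurable_prodMk_left)
    calc ENNReal.ofReal (ρ x y) = ∫⁻ _ : X, ENNReal.ofReal (ρ x y) ∂μ := by
          rw [lintegral_const, measure_univ, mul_one]
      _ ≤ ∫⁻ z, (ENNReal.ofReal (ρ x z) + ENNReal.ofReal (ρ z y)) ∂μ := by
          refine lintegral_mono fun z => ?_
          rw [← ENNReal.ofReal_add (hnn x z) (hnn z y)]
          exact ENNReal.ofReal_le_ofReal (htri x z y)
      _ = h x + ∫⁻ z, ENNReal.ofReal (ρ z y) ∂μ := lintegral_add_left m1 _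
      _ = h x + h y := by
          congr 1
          refine lintegral_congr fun z => ?_
          rw [hsymm z y]
  -- uniqueness of index
  have huniq : ∀ k (x : X) (i : Fin (n k)), x ∈ parts k i → idx k x = i := by
    intro k x i hxi
    by_contra hne
    exact Set.disjoint_left.mp (hdisj k (idx k x) i hne) (hidx k x) hxi
  -- diagonal union of the partition
  set D : ℕ → Set (X × X) := fun k => ⋃ i, parts k i ×ˢ parts k i with hDdef
  have hDm : ∀ k, MeasurableSet (D k) :=
    fun k => MeasurableSet.iUnion fun i => (hmeas k i).prod (hmeas k i)
  have hDsec : ∀ k x, Prod.mk x ⁻¹' D k = parts k (idx k x) := by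
    intro k x
    ext y
    simp only [Set.mem_preimage, hDdef, Set.mem_iUnion, Set.mem_prod]
    constructor
    · rintro ⟨i, hxi, hyi⟩
      rwa [huniq k x i hxi]
    · intro hy
      exact ⟨idx k x, hidx k x, hy⟩
  have hDswap : ∀ k (p : X × X), p.swap ∈ D k ↔ p ∈ D k := by
    intro k p
    simp only [hDdef, Set.mem_iUnion, Set.mem_prod, Prod.fst_swap, Prod.snd_swap]
    exact ⟨fun ⟨i, a, b⟩ => ⟨i, b, a⟩, fun ⟨i, a, b⟩ => ⟨i, b, a⟩⟩
  have hμD : ∀ k, (μ.prod μ) (D k) ≤ ((n k : ℝ≥0∞))⁻¹ := by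
    intro k
    calc (μ.prod μ) (D k) ≤ ∑' i, (μ.prod μ) (parts k i ×ˢ parts k i) := measure_iUnion_le _
      _ = ∑ i : Fin (n k), ((n k : ℝ≥0∞))⁻¹ * ((n k : ℝ≥0∞))⁻¹ := by
          rw [tsum_fintype]
          exact Finset.sum_congr rfl fun i _ => by rw [Measure.prod_prod, heq k i]
      _ = (n k : ℝ≥0∞) * (((n k : ℝ≥0∞))⁻¹ * ((n k : ℝ≥0∞))⁻¹) := by
          rw [Finset.sum_const, Finset.card_univ, Fintype.card_fin, nsmul_eq_mul]
      _ = ((n k : ℝ≥0∞))⁻¹ := by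
          rw [← mul_assoc, ENNReal.mul_inv_cancel (hn0 k) (hntop k), one_mul]
  have hsum_eq : ∀ k, ∑ i, ∫⁻ q in parts k i ×ˢ parts k i, f q ∂(μ.prod μ)
      = ∫⁻ q in D k, f q ∂(μ.prod μ) := by
    intro k
    rw [hDdef]
    rw [lintegral_iUnion (fun i => (hmeas k i).prod (hmeas k i)) ?_ f, tsum_fintype]
    intro i j hij
    rw [Function.onFun]
    rw [Set.disjoint_left]
    rintro p ⟨hp1, -⟩ ⟨hq1, -⟩
    exact Set.disjoint_left.mp (hdisj k i j hij) hp1 hq1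
  -- reduce to an eventual bound by 5δ
  rw [ENNReal.tendsto_nhds_zero]
  suffices hsuff : ∀ δ : ℝ≥0∞, 0 < δ → δ ≠ ⊤ → ∀ᶠ k in atTop,
      (n k : ℝ≥0∞) * ∑ i, ∫⁻ q in parts k i ×ˢ parts k i,
        ENNReal.ofReal (ρ q.1 q.2) ∂(μ.prod μ) ≤ 5 * δ by
    intro ε hε
    have hδpos : (0:ℝ≥0∞) < min (ε/5) 1 :=
      lt_min (ENNReal.div_pos hε.ne' (by norm_num)) one_pos
    have hδtop : min (ε/5) 1 ≠ ⊤ :=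
      ne_top_of_le_ne_top ENNReal.one_ne_top (min_le_right _ _)
    refine (hsuff _ hδpos hδtop).mono fun k hk => hk.trans ?_
    calc 5 * min (ε/5) 1 ≤ 5 * (ε/5) := mul_le_mul_right (min_le_left _ _) _
      _ ≤ ε := ENNReal.mul_div_le
  intro δ hδ hδtop
  obtain ⟨M, P, hPm, hPd, hPdiam, hPint⟩ :=
    exists_cover_s16 μ ρ hsymm htri hmρ S hSc hsep h hhm hfin δ.toReal
      (ENNReal.toReal_pos hδ.ne' hδtop) δ hδ
  set U : Set X := ⋃ j, P j with hUdef
  have hUm : MeasurableSet U := MeasurableSet.iUnion hPm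
  set G : Set (X × X) := ⋃ j, P j ×ˢ P j with hGdef
  have hGm : MeasurableSet G := MeasurableSet.iUnion fun j => (hPm j).prod (hPm j)
  have hGswap : ∀ p : X × X, p.swap ∈ G ↔ p ∈ G := by
    intro p
    simp only [hGdef, Set.mem_iUnion, Set.mem_prod, Prod.fst_swap, Prod.snd_swap]
    exact ⟨fun ⟨i, a, b⟩ => ⟨i, b, a⟩, fun ⟨i, a, b⟩ => ⟨i, b, a⟩⟩
  have hGsec : ∀ (j : Fin M) (x : X), x ∈ P j → Prod.mk x ⁻¹' G = P j := by
    intro j x hxj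
    ext y
    simp only [Set.mem_preimage, hGdef, Set.mem_iUnion, Set.mem_prod]
    constructor
    · rintro ⟨j', hxj', hyj'⟩
      rcases eq_or_ne j' j with rfl | hne
      · exact hyj'
      · exact absurd hxj (Set.disjoint_left.mp (hPd hne) hxj')
    · intro hy
      exact ⟨j, hxj, hy⟩
  set ψ : ℕ → X → ℝ≥0∞ := fun k x => (n k : ℝ≥0∞) * μ (Prod.mk x ⁻¹' (D k \ G)) with hψdef
  have hψm : ∀ k, Measurable (ψ k) := fun k =>
    (measurable_measure_prodMk_left ((hDm k).diff hGm)).const_mul _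
  have hψle : ∀ k x, ψ k x ≤ 1 := by
    intro k x
    have h1 : μ (Prod.mk x ⁻¹' (D k \ G)) ≤ ((n k : ℝ≥0∞))⁻¹ := by
      have h2 : μ (Prod.mk x ⁻¹' (D k \ G)) ≤ μ (Prod.mk x ⁻¹' D k) :=
        measure_mono (Set.preimage_mono Set.diff_subset)
      rwa [hDsec k x, heq k (idx k x)] at h2
    calc ψ k x ≤ (n k : ℝ≥0∞) * ((n k : ℝ≥0∞))⁻¹ := mul_le_mul_right h1 _
      _ = 1 := ENNReal.mul_inv_cancel (hn0 k) (hntop k)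
  -- Fubini for the bad term
  have hBD : ∀ k, ∫⁻ p, (D k \ G).indicator (fun p => h p.1) p ∂(μ.prod μ)
      = ∫⁻ x, h x * μ (Prod.mk x ⁻¹' (D k \ G)) ∂μ := by
    intro k
    rw [MeasureTheory.lintegral_prod ((D k \ G).indicator (fun p => h p.1))
      ((Measurable.indicator (f := fun p : X × X => h p.1) (hhm.comp measurable_fst)
        ((hDm k).diff hGm)).aemeasurable)]
    refine lintegral_congr fun x => ?_
    calc ∫⁻ y, (D k \ G).indicator (fun p => h p.1) (x, y) ∂μ
        = ∫⁻ y, (Prod.mk x ⁻¹' (D k \ G)).indicator (fun _ => h x) y ∂μ := by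
          refine lintegral_congr fun y => ?_
          by_cases hy : (x, y) ∈ D k \ G
          · rw [Set.indicator_of_mem hy, Set.indicator_of_mem (Set.mem_preimage.mpr hy)]
          · rw [Set.indicator_of_notMem hy,
              Set.indicator_of_notMem (fun c => hy (Set.mem_preimage.mp c))]
      _ = h x * μ (Prod.mk x ⁻¹' (D k \ G)) :=
          lintegral_indicator_const (measurable_prodMk_left ((hDm k).diff hGm)) _
  -- swap symmetry for the other bad term
  have hCB : ∀ k, ∫⁻ p, (D k \ G).indicator (fun p => h p.2) p ∂(μ.prod μ)
      = ∫⁻ p, (D k \ G).indicator (fun p => h p.1) p ∂(μ.prod μ) := by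
    intro k
    rw [← MeasureTheory.lintegral_prod_swap
      (fun p : X × X => (D k \ G).indicator (fun p => h p.1) p)]
    refine lintegral_congr fun z => ?_
    have hz : z.swap ∈ D k \ G ↔ z ∈ D k \ G :=
      ⟨fun hh => ⟨(hDswap k z).mp hh.1, fun hG => hh.2 ((hGswap z).mpr hG)⟩,
       fun hh => ⟨(hDswap k z).mpr hh.1, fun hG => hh.2 ((hGswap z).mp hG)⟩⟩
    by_cases hzz : z ∈ D k \ G
    · rw [Set.indicator_of_mem (hz.mpr hzz), Set.indicator_of_mem hzz]
      rfl
    · rw [Set.indicator_of_notMem (fun c => hzz (hz.mp c)), Set.indicator_of_notMem hzz]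
  -- pointwise estimate on the product space
  have hpt : ∀ k (p : X × X), (D k).indicator f p ≤
      (D k ∩ G).indicator (fun _ => ENNReal.ofReal δ.toReal) p
      + ((D k \ G).indicator (fun p => h p.1) p + (D k \ G).indicator (fun p => h p.2) p) := by
    intro k p
    by_cases hpD : p ∈ D k
    · by_cases hpG : p ∈ G
      · rw [Set.indicator_of_mem hpD, Set.indicator_of_mem (Set.mem_inter hpD hpG)]
        refine le_trans ?_ le_self_add
        obtain ⟨j, hj⟩ := mem_iUnion.mp hpG
        rw [Set.mem_prod] at hj
        exact ENNReal.ofReal_le_ofReal (le_of_lt (hPdiam j _ hj.1 _ hj.2))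
      · rw [Set.indicator_of_mem hpD,
          Set.indicator_of_mem ((Set.mem_diff p).mpr ⟨hpD, hpG⟩) (fun p => h p.1),
          Set.indicator_of_mem ((Set.mem_diff p).mpr ⟨hpD, hpG⟩) (fun p => h p.2)]
        refine le_trans (hkey p.1 p.2) ?_
        exact le_add_self
    · rw [Set.indicator_of_notMem hpD]
      exact zero_le
  -- main estimate for fixed k
  have hmain : ∀ k, (n k : ℝ≥0∞) * ∑ i, ∫⁻ q in parts k i ×ˢ parts k i,
      ENNReal.ofReal (ρ q.1 q.2) ∂(μ.prod μ)
      ≤ δ + 2 * ∫⁻ x, h x * ψ k x ∂μ := by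
    intro k
    have m1 : Measurable fun q : X × X =>
        (D k ∩ G).indicator (fun _ => ENNReal.ofReal δ.toReal) q :=
      measurable_const.indicator ((hDm k).inter hGm)
    have m2 : Measurable fun q : X × X => (D k \ G).indicator (fun p => h p.1) q :=
      (hhm.comp measurable_fst).indicator ((hDm k).diff hGm)
    have msec : Measurable fun x => h x * μ (Prod.mk x ⁻¹' (D k \ G)) :=
      hhm.mul (measurable_measure_prodMk_left ((hDm k).diff hGm))
    have hterm2 : (n k : ℝ≥0∞) * ∫⁻ p, (D k \ G).indicator (fun p => h p.1) p ∂(μ.prod μ)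
        = ∫⁻ x, h x * ψ k x ∂μ := by
      rw [hBD k, ← lintegral_const_mul _ msec]
      refine lintegral_congr fun x => ?_
      show (n k : ℝ≥0∞) * (h x * μ (Prod.mk x ⁻¹' (D k \ G)))
        = h x * ((n k : ℝ≥0∞) * μ (Prod.mk x ⁻¹' (D k \ G)))
      ring
    have hterm1 : (n k : ℝ≥0∞) * ∫⁻ p, (D k ∩ G).indicator
        (fun _ => ENNReal.ofReal δ.toReal) p ∂(μ.prod μ) ≤ δ := by
      rw [lintegral_indicator_const ((hDm k).inter hGm)]
      have hμDG : (μ.prod μ) (D k ∩ G) ≤ ((n k : ℝ≥0∞))⁻¹ :=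
        le_trans (measure_mono Set.inter_subset_left) (hμD k)
      calc (n k : ℝ≥0∞) * (ENNReal.ofReal δ.toReal * (μ.prod μ) (D k ∩ G))
          ≤ (n k : ℝ≥0∞) * (ENNReal.ofReal δ.toReal * ((n k : ℝ≥0∞))⁻¹) :=
            mul_le_mul_right (mul_le_mul_right hμDG _) _
        _ = ENNReal.ofReal δ.toReal * ((n k : ℝ≥0∞) * ((n k : ℝ≥0∞))⁻¹) := by ring
        _ = ENNReal.ofReal δ.toReal := by
            rw [ENNReal.mul_inv_cancel (hn0 k) (hntop k), mul_one]
        _ = δ := ENNReal.ofReal_toReal hδtop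
    calc (n k : ℝ≥0∞) * ∑ i, ∫⁻ q in parts k i ×ˢ parts k i,
          ENNReal.ofReal (ρ q.1 q.2) ∂(μ.prod μ)
        = (n k : ℝ≥0∞) * ∫⁻ q in D k, f q ∂(μ.prod μ) := by rw [← hsum_eq k]
      _ = (n k : ℝ≥0∞) * ∫⁻ q, (D k).indicator f q ∂(μ.prod μ) := by
          rw [lintegral_indicator (hDm k)]
      _ ≤ (n k : ℝ≥0∞) * ∫⁻ q, ((D k ∩ G).indicator (fun _ => ENNReal.ofReal δ.toReal) q
            + ((D k \ G).indicator (fun p => h p.1) q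
              + (D k \ G).indicator (fun p => h p.2) q)) ∂(μ.prod μ) :=
          mul_le_mul_right (lintegral_mono (hpt k)) _
      _ = (n k : ℝ≥0∞) * ∫⁻ q, (D k ∩ G).indicator (fun _ => ENNReal.ofReal δ.toReal) q ∂(μ.prod μ)
            + ((n k : ℝ≥0∞) * ∫⁻ q, (D k \ G).indicator (fun p => h p.1) q ∂(μ.prod μ)
              + (n k : ℝ≥0∞) * ∫⁻ q, (D k \ G).indicator (fun p => h p.2) q ∂(μ.prod μ)) := by
          rw [lintegral_add_left m1, lintegral_add_left m2, mul_add, mul_add]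
      _ ≤ δ + 2 * ∫⁻ x, h x * ψ k x ∂μ := by
          refine add_le_add hterm1 ?_
          rw [hCB k, hterm2, two_mul]
  -- split the integral over U and its complement
  have hsplit : ∀ k, ∫⁻ x, h x * ψ k x ∂μ
      ≤ δ + ∫⁻ x, U.indicator (fun x => h x * ψ k x) x ∂μ := by
    intro k
    have hptw : ∀ x, h x * ψ k x
        ≤ Uᶜ.indicator h x + U.indicator (fun x => h x * ψ k x) x := by
      intro x
      by_cases hx : x ∈ U
      · rw [Set.indicator_of_mem hx, Set.indicator_of_notMem (Set.notMem_compl_iff.mpr hx),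
          zero_add]
      · rw [Set.indicator_of_notMem hx, Set.indicator_of_mem (Set.mem_compl hx), add_zero]
        calc h x * ψ k x ≤ h x * 1 := mul_le_mul_right (hψle k x) _
          _ = h x := mul_one _
    calc ∫⁻ x, h x * ψ k x ∂μ
        ≤ ∫⁻ x, (Uᶜ.indicator h x + U.indicator (fun x => h x * ψ k x) x) ∂μ :=
          lintegral_mono hptw
      _ = ∫⁻ x, Uᶜ.indicator h x ∂μ + ∫⁻ x, U.indicator (fun x => h x * ψ k x) x ∂μ :=
          lintegral_add_left (hhm.indicator hUm.compl) _
      _ ≤ δ + ∫⁻ x, U.indicator (fun x => h x * ψ k x) x ∂μ := add_le_add_left hPint _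
  -- the remaining term tends to zero (dominated convergence)
  have hsmall : Tendsto (fun k => ∫⁻ x, U.indicator (fun x => h x * ψ k x) x ∂μ)
      atTop (𝓝 0) := by
    have h0 : (𝓝 (0:ℝ≥0∞)) = 𝓝 (∫⁻ _ : X, (0:ℝ≥0∞) ∂μ) := by rw [lintegral_zero]
    rw [h0]
    apply tendsto_lintegral_of_dominated_convergence h
    · exact fun k => (hhm.mul (hψm k)).indicator hUm
    · intro k
      refine Filter.Eventually.of_forall fun x => ?_
      by_cases hx : x ∈ U
      · rw [Set.indicator_of_mem hx]
        calc h x * ψ k x ≤ h x * 1 := mul_le_mul_right (hψle k x) _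
          _ = h x := mul_one _
      · rw [Set.indicator_of_notMem hx]
        exact zero_le
    · exact hfin
    · have hae1 : ∀ᵐ x ∂μ, h x < ⊤ := ae_lt_top hhm hfin
      have hae2 : ∀ᵐ x ∂μ, ∀ j : Fin M, x ∈ P j →
          Tendsto (fun k => (n k : ℝ≥0∞) * μ (P j ∩ parts k (idx k x))) atTop (𝓝 1) :=
        ae_all_iff.mpr fun j => hdensity (P j) (hPm j)
      filter_upwards [hae1, hae2] with x hx1 hx2
      by_cases hxU : x ∈ U
      · obtain ⟨j, hxj⟩ := mem_iUnion.mp hxU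
        have hsec : ∀ k, Prod.mk x ⁻¹' (D k \ G) = parts k (idx k x) \ P j := by
          intro k
          rw [Set.preimage_diff, hDsec k x, hGsec j x hxj]
        have hψeq : ∀ k, ψ k x = 1 - (n k : ℝ≥0∞) * μ (P j ∩ parts k (idx k x)) := by
          intro k
          have e1 := measure_inter_add_diff (μ := μ) (parts k (idx k x)) (hPm j)
          have e2 : (n k : ℝ≥0∞) * μ (parts k (idx k x) ∩ P j)
              + (n k : ℝ≥0∞) * μ (parts k (idx k x) \ P j) = 1 := by
            rw [← mul_add, e1, heq k (idx k x), ENNReal.mul_inv_cancel (hn0 k) (hntop k)]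
          have hc : (n k : ℝ≥0∞) * μ (parts k (idx k x) ∩ P j) ≠ ⊤ := by
            refine ne_top_of_le_ne_top ENNReal.one_ne_top ?_
            calc (n k : ℝ≥0∞) * μ (parts k (idx k x) ∩ P j)
                ≤ (n k : ℝ≥0∞) * μ (parts k (idx k x)) :=
                  mul_le_mul_right (measure_mono Set.inter_subset_left) _
              _ = 1 := by rw [heq k (idx k x), ENNReal.mul_inv_cancel (hn0 k) (hntop k)]
          have e3 : (n k : ℝ≥0∞) * μ (parts k (idx k x) \ P j)
              = 1 - (n k : ℝ≥0∞) * μ (parts k (idx k x) ∩ P j) :=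
            ENNReal.eq_sub_of_add_eq hc (by rw [add_comm]; exact e2)
          calc ψ k x = (n k : ℝ≥0∞) * μ (Prod.mk x ⁻¹' (D k \ G)) := rfl
            _ = (n k : ℝ≥0∞) * μ (parts k (idx k x) \ P j) := by rw [hsec k]
            _ = 1 - (n k : ℝ≥0∞) * μ (parts k (idx k x) ∩ P j) := e3
            _ = 1 - (n k : ℝ≥0∞) * μ (P j ∩ parts k (idx k x)) := by rw [Set.inter_comm]
        have hψt : Tendsto (fun k => ψ k x) atTop (𝓝 0) := by
          have ht : Tendsto (fun k => 1 - (n k : ℝ≥0∞) * μ (P j ∩ parts k (idx k x)))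
              atTop (𝓝 (1 - 1)) :=
            ENNReal.Tendsto.sub tendsto_const_nhds (hx2 j hxj) (Or.inl ENNReal.one_ne_top)
          rw [tsub_self] at ht
          exact ht.congr fun k => (hψeq k).symm
        have hmt := ENNReal.Tendsto.const_mul (a := h x) hψt (Or.inr hx1.ne)
        rw [mul_zero] at hmt
        exact hmt.congr fun k => (Set.indicator_of_mem hxU _).symm
      · exact tendsto_const_nhds.congr fun k => (Set.indicator_of_notMem hxU _).symm
  -- conclusion
  have hev := ENNReal.tendsto_nhds_zero.mp hsmall δ hδ
  filter_upwards [hev] with k hk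
  calc (n k : ℝ≥0∞) * ∑ i, ∫⁻ q in parts k i ×ˢ parts k i,
        ENNReal.ofReal (ρ q.1 q.2) ∂(μ.prod μ)
      ≤ δ + 2 * ∫⁻ x, h x * ψ k x ∂μ := hmain k
    _ ≤ δ + 2 * (δ + ∫⁻ x, U.indicator (fun x => h x * ψ k x) x ∂μ) :=
        add_le_add_right (mul_le_mul_right (hsplit k) _) _
    _ ≤ δ + 2 * (δ + δ) := add_le_add_right (mul_le_mul_right (add_le_add_right hk _) _) _
    _ = 5 * δ := by ring

/-- let `ρ` be an admissible summable metric and `λ_k` a sequence of finite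
measurable partitions of `X` into `n_k` parts of equal measure satisfying the Lebesgue
density property (for every measurable `Y`, for a.e. `y ∈ Y`, the density
`μ(Y ∩ λ_k(y))/μ(λ_k(y)) = n_k · μ(Y ∩ λ_k(y))` tends to `1`). Then the normalized traces
`(1/n_k)·tr A_{ρ,λ_k} = n_k ∑_i ∫_{Δ_i×Δ_i} ρ` tend to `0`. -/
theorem statement16 {X : Type*} [MeasurableSpace X] [StandardBorelSpace X]
    (μ : Measure X) [IsProbabilityMeasure μ] [NullSingletonClass μ]
    (ρ : X → X → ℝ) (hρ : IsMetricFun ρ) (hadm : Admissible μ ρ)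
    (hint : Integrable (Function.uncurry ρ) (μ.prod μ))
    (n : ℕ → ℕ) (hn : ∀ k, 1 ≤ n k) (parts : (k : ℕ) → Fin (n k) → Set X)
    (hmeas : ∀ k i, MeasurableSet (parts k i))
    (hcover : ∀ k, (⋃ i, parts k i) = Set.univ)
    (hdisj : ∀ k, ∀ i j, i ≠ j → Disjoint (parts k i) (parts k j))
    (heq : ∀ k i, μ (parts k i) = ((n k : ℝ≥0∞))⁻¹)
    (idx : (k : ℕ) → X → Fin (n k)) (hidx : ∀ k x, x ∈ parts k (idx k x))
    (hdensity : ∀ Y : Set X, MeasurableSet Y → ∀ᵐ y ∂μ, y ∈ Y →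
      Tendsto (fun k => (n k : ℝ≥0∞) * μ (Y ∩ parts k (idx k y))) atTop (nhds 1)) :
    Tendsto
      (fun k => (n k : ℝ≥0∞) *
        ∑ i, ∫⁻ q in parts k i ×ˢ parts k i, ENNReal.ofReal (ρ q.1 q.2) ∂(μ.prod μ))
      atTop (nhds 0) := by
  obtain ⟨⟨hnn, -, hsymm, htri⟩, -⟩ := hρ
  obtain ⟨hmρ, S, -, hSc, hsep⟩ := hadm
  exact statement16_aux μ ρ hnn hsymm htri hmρ S hSc hsep hint n hn parts hmeas hdisj heq
    idx hidx hdensity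
end
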